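/- arXiv:2105.01587 — 5 statements merged into one kernel-verified Lean document; each statement's English description precedes it below -/
import Mathlib

section
/- If f: X → ℝ is closed and convex on X = ℝⁿ, then f is γ-strongly convex with respect to a norm ‖·‖ if and only if its Fenchel–Legendre conjugate f* is (1/γ)-Lipschitz smooth with respect to the dual norm. -/
open RealInnerProductSpace


variable {F : Type*} [NormedAddCommGroup F] [InnerProductSpace ℝ F] [CompleteSpace F]

/-- If `h` has gradient `g` at a global minimum `a`, then `g = 0`. -/
lemma grad_zero_of_min {h : F → ℝ} {g a : F} (hg : HasGradientAt h g a)
    (hmin : ∀ w, h a ≤ h w) : g = 0 := by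
  have hloc : IsLocalMin h a := Filter.Eventually.of_forall hmin
  have := hloc.hasFDerivAt_eq_zero hg.hasFDerivAt
  have h2 : InnerProductSpace.toDual ℝ F g = InnerProductSpace.toDual ℝ F 0 := by
    simpa using this
  exact (InnerProductSpace.toDual ℝ F).injective h2

/-- If `h w - ⟪x₀, w⟫` is minimized at `a` and `h` has gradient `g` there, `g = x₀`. -/
lemma grad_eq_of_min_sub {h : F → ℝ} {g a x₀ : F} (hg : HasGradientAt h g a)
    (hmin : ∀ w, h a - ⟪x₀, a⟫ ≤ h w - ⟪x₀, w⟫) : g = x₀ := by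
  have hg2 : HasGradientAt (fun w => h w - ⟪x₀, w⟫) (g - x₀) a := by
    rw [hasGradientAt_iff_hasFDerivAt] at hg ⊢
    have hlin : HasFDerivAt (fun w : F => ⟪x₀, w⟫) (InnerProductSpace.toDual ℝ F x₀) a := by
      exact (InnerProductSpace.toDual ℝ F x₀).hasFDerivAt
    rw [map_sub]
    exact hg.sub hlin
  exact sub_eq_zero.mp (grad_zero_of_min hg2 hmin)

/-- derivative of `t ↦ h (a + t • d)` -/
lemma hasDerivAt_line {h : F → ℝ} {G : F → F} (hG : ∀ x, HasGradientAt h (G x) x)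
    (a d : F) (t : ℝ) :
    HasDerivAt (fun s : ℝ => h (a + s • d)) ⟪G (a + t • d), d⟫ t := by
  have hl : HasDerivAt (fun s : ℝ => a + s • d) d t := by
    simpa using ((hasDerivAt_id t).smul_const d).const_add a
  have hf := (hG (a + t • d)).hasFDerivAt
  have := hf.comp_hasDerivAt t hl
  simpa [InnerProductSpace.toDual_apply_apply, Function.comp_def] using this

/-- Gradient inequality for convex functions. -/
lemma convex_grad_ineq {h : F → ℝ} (hc : ConvexOn ℝ Set.univ h)
    {G : F → F} (hG : ∀ x, HasGradientAt h (G x) x) (x y : F) :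
    h y + ⟪G y, x - y⟫ ≤ h x := by
  have hφc : ConvexOn ℝ Set.univ (fun t : ℝ => h (y + t • (x - y))) := by
    have := hc.comp_affineMap (AffineMap.lineMap y x)
    have he : (fun t : ℝ => h (y + t • (x - y))) = h ∘ (AffineMap.lineMap y x : ℝ →ᵃ[ℝ] F) := by
      funext t
      simp [AffineMap.lineMap_apply]
      rw [add_comm]
    rw [he]
    simpa using this
  have hd : HasDerivAt (fun t : ℝ => h (y + t • (x - y))) ⟪G (y + (0:ℝ) • (x - y)), x - y⟫ 0 :=
    hasDerivAt_line hG y (x - y) 0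
  have := hφc.le_slope_of_hasDerivAt (Set.mem_univ (0:ℝ)) (Set.mem_univ 1) one_pos hd
  rw [slope_def_field] at this
  simp at this ⊢
  linarith

section NdLemmas
variable {N Nd : F → ℝ}

lemma Nd_nonneg (hN0 : ∀ x, 0 ≤ N x) (hNzero : ∀ x, N x = 0 ↔ x = 0)
    (hNd : ∀ s, IsLUB {r | ∃ x, N x ≤ 1 ∧ r = ⟪x, s⟫} (Nd s)) (s : F) : 0 ≤ Nd s := by
  have h0 : (0:ℝ) ∈ {r | ∃ x, N x ≤ 1 ∧ r = ⟪x, s⟫} :=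
    ⟨0, by simp [(hNzero 0).mpr rfl], by simp⟩
  exact (hNd s).1 h0

lemma gen_cauchy_schwarz (hN0 : ∀ x, 0 ≤ N x) (hNzero : ∀ x, N x = 0 ↔ x = 0)
    (hNsmul : ∀ (c : ℝ) (x), N (c • x) = |c| * N x)
    (hNd : ∀ s, IsLUB {r | ∃ x, N x ≤ 1 ∧ r = ⟪x, s⟫} (Nd s)) (x s : F) :
    ⟪x, s⟫ ≤ N x * Nd s := by
  rcases eq_or_lt_of_le (hN0 x) with h0 | hpos
  · have hx0 : x = 0 := (hNzero x).mp h0.symm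
    rw [hx0, (hNzero 0).mpr rfl]
    simp [mul_nonneg, Nd_nonneg hN0 hNzero hNd s]
  · have hx' : N ((N x)⁻¹ • x) ≤ 1 := by
      rw [hNsmul, abs_of_pos (inv_pos.mpr hpos), inv_mul_cancel₀ (ne_of_gt hpos)]
    have hmem : ⟪(N x)⁻¹ • x, s⟫ ∈ {r | ∃ z, N z ≤ 1 ∧ r = ⟪z, s⟫} := ⟨_, hx', rfl⟩
    have hle := (hNd s).1 hmem
    rw [real_inner_smul_left] at hle
    calc ⟪x, s⟫ = N x * ((N x)⁻¹ * ⟪x, s⟫) := by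
          rw [← mul_assoc, mul_inv_cancel₀ hpos.ne', one_mul]
      _ ≤ N x * Nd s := mul_le_mul_of_nonneg_left hle (le_of_lt hpos)

lemma Nd_smul_le (hN0 : ∀ x, 0 ≤ N x) (hNzero : ∀ x, N x = 0 ↔ x = 0)
    (hNd : ∀ s, IsLUB {r | ∃ x, N x ≤ 1 ∧ r = ⟪x, s⟫} (Nd s)) {c : ℝ} (hc : 0 ≤ c) (s : F) :
    Nd (c • s) ≤ c * Nd s := by
  apply (hNd (c • s)).2
  rintro r ⟨x, hx, rfl⟩
  rw [real_inner_smul_right]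
  exact mul_le_mul_of_nonneg_left ((hNd s).1 ⟨x, hx, rfl⟩) hc

end NdLemmas

/-- sup attained at a greatest element -/
lemma isLUB_eq_of_greatest {S : Set ℝ} {m b : ℝ} (h : IsLUB S b) (hm : m ∈ S)
    (hmax : ∀ r ∈ S, r ≤ m) : b = m :=
  h.unique (IsGreatest.isLUB ⟨hm, fun r hr => hmax r hr⟩)

section Euclid
variable {n : ℕ} {N : EuclideanSpace ℝ (Fin n) → ℝ}

/-- Subadditivity over finite sums. -/
lemma N_upper (hN0 : ∀ x, 0 ≤ N x) (hNzero : ∀ x, N x = 0 ↔ x = 0)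
    (hNsmul : ∀ (c : ℝ) (x), N (c • x) = |c| * N x)
    (hNadd : ∀ x y, N (x + y) ≤ N x + N y) :
    ∃ C : ℝ, 0 ≤ C ∧ ∀ x, N x ≤ C * ‖x‖ := by
  set b := EuclideanSpace.basisFun (Fin n) ℝ
  refine ⟨∑ i, N (b i), Finset.sum_nonneg (fun i _ => hN0 _), fun x => ?_⟩
  have hsum : ∀ (s : Finset (Fin n)) (v : Fin n → EuclideanSpace ℝ (Fin n)),
      N (∑ i ∈ s, v i) ≤ ∑ i ∈ s, N (v i) := by
    intro s
    induction s using Finset.induction with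
    | empty => intro v; simp [(hNzero 0).mpr rfl]
    | insert _ _ hni ih =>
      intro v
      rw [Finset.sum_insert hni, Finset.sum_insert hni]
      exact le_trans (hNadd _ _) (by linarith [ih v])
  have hrepr : ∑ i, x i • b i = x := by
    exact b.sum_repr x
  have habs : ∀ i, |x i| ≤ ‖x‖ := by
    intro i
    have h1 : ⟪EuclideanSpace.single i (1:ℝ), x⟫ = x i := by
      simp [EuclideanSpace.inner_single_left]
    calc |x i| = |⟪EuclideanSpace.single i (1:ℝ), x⟫| := by rw [h1]
      _ ≤ ‖EuclideanSpace.single i (1:ℝ)‖ * ‖x‖ := abs_real_inner_le_norm _ _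
      _ = ‖x‖ := by rw [EuclideanSpace.norm_single]; simp
  calc N x = N (∑ i, x i • b i) := by rw [hrepr]
    _ ≤ ∑ i, N (x i • b i) := hsum _ _
    _ = ∑ i, |x i| * N (b i) := by simp [hNsmul]
    _ ≤ ∑ i, ‖x‖ * N (b i) := by
        apply Finset.sum_le_sum
        intro i _
        exact mul_le_mul_of_nonneg_right (habs i) (hN0 _)
    _ = (∑ i, N (b i)) * ‖x‖ := by
        rw [Finset.sum_mul]
        exact Finset.sum_congr rfl (fun i _ => mul_comm _ _)

end Euclid

section Euclid2
variable {n : ℕ} {N : EuclideanSpace ℝ (Fin n) → ℝ}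

lemma N_lower (hN0 : ∀ x, 0 ≤ N x) (hNzero : ∀ x, N x = 0 ↔ x = 0)
    (hNsmul : ∀ (c : ℝ) (x), N (c • x) = |c| * N x)
    (hNadd : ∀ x y, N (x + y) ≤ N x + N y) :
    ∃ c : ℝ, 0 < c ∧ ∀ x, c * ‖x‖ ≤ N x := by
  obtain ⟨C, hC0, hC⟩ := N_upper hN0 hNzero hNsmul hNadd
  have hneg : ∀ x : EuclideanSpace ℝ (Fin n), N (-x) = N x := by
    intro x
    have := hNsmul (-1) x
    simpa using this
  have hlip : ∀ x y : EuclideanSpace ℝ (Fin n), |N x - N y| ≤ C * ‖x - y‖ := by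
    intro x y
    rw [abs_sub_le_iff]
    constructor
    · have h1 : N x ≤ N (x - y) + N y := by
        have := hNadd (x - y) y
        simpa using this
      linarith [hC (x - y)]
    · have h1 : N y ≤ N (y - x) + N x := by
        have := hNadd (y - x) x
        simpa using this
      have h2 : N (y - x) = N (x - y) := by
        rw [← hneg (y - x)]; congr 1; abel
      linarith [hC (x - y), h2 ▸ h1]
  have hNcont : Continuous N := by
    rw [Metric.continuous_iff]
    intro x ε hε
    refine ⟨ε / (C + 1), by positivity, fun y hy => ?_⟩
    have h1 := hlip y x
    have h2 : dist y x = ‖y - x‖ := dist_eq_norm y x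
    calc dist (N y) (N x) = |N y - N x| := Real.dist_eq _ _
      _ ≤ C * ‖y - x‖ := h1
      _ ≤ (C + 1) * ‖y - x‖ := by nlinarith [norm_nonneg (y - x)]
      _ < ε := by
          rw [h2] at hy
          have hC1 : 0 < C + 1 := by linarith
          calc (C + 1) * ‖y - x‖ < (C + 1) * (ε / (C + 1)) := by
                apply mul_lt_mul_of_pos_left hy hC1
            _ = ε := by field_simp
  rcases Nat.eq_zero_or_pos n with hn | hn
  · refine ⟨1, one_pos, fun x => ?_⟩
    have hx : x = 0 := by
      subst hn
      exact Subsingleton.elim x 0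
    simp [hx, (hNzero 0).mpr rfl]
  · -- sphere is nonempty and compact
    have hmem : EuclideanSpace.single (⟨0, hn⟩ : Fin n) (1:ℝ) ∈ Metric.sphere (0 : EuclideanSpace ℝ (Fin n)) 1 := by
      simp [EuclideanSpace.norm_single]
    obtain ⟨x₀, hx₀mem, hx₀min⟩ :=
      (isCompact_sphere (0 : EuclideanSpace ℝ (Fin n)) 1).exists_isMinOn ⟨_, hmem⟩
        hNcont.continuousOn
    have hx₀norm : ‖x₀‖ = 1 := by simpa using hx₀mem
    have hx₀ne : x₀ ≠ 0 := by
      intro h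
      rw [h] at hx₀norm
      simp at hx₀norm
    have hcpos : 0 < N x₀ := by
      rcases eq_or_lt_of_le (hN0 x₀) with h | h
      · exact absurd ((hNzero x₀).mp h.symm) hx₀ne
      · exact h
    refine ⟨N x₀, hcpos, fun x => ?_⟩
    rcases eq_or_ne x 0 with hx | hx
    · simp [hx, (hNzero 0).mpr rfl]
    · have hxn : (0:ℝ) < ‖x‖ := norm_pos_iff.mpr hx
      have hu : ‖x‖⁻¹ • x ∈ Metric.sphere (0 : EuclideanSpace ℝ (Fin n)) 1 := by
        simp [norm_smul, abs_of_pos (inv_pos.mpr hxn), inv_mul_cancel₀ hxn.ne']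
      have : N x₀ ≤ N (‖x‖⁻¹ • x) := hx₀min hu
      have h2 : N (‖x‖⁻¹ • x) = ‖x‖⁻¹ * N x := by
        rw [hNsmul, abs_of_pos (inv_pos.mpr hxn)]
      rw [h2] at this
      have h3 : N x₀ * ‖x‖ ≤ (‖x‖⁻¹ * N x) * ‖x‖ :=
        mul_le_mul_of_nonneg_right this hxn.le
      calc N x₀ * ‖x‖ ≤ (‖x‖⁻¹ * N x) * ‖x‖ := h3
        _ = N x := by field_simp

end Euclid2

section Min
variable {n : ℕ}

lemma exists_min_of_quadratic_lb (φ : EuclideanSpace ℝ (Fin n) → ℝ) (hc : Continuous φ)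
    (a K b : ℝ) (ha : 0 < a) (h : ∀ x, a * ‖x‖ ^ 2 - K * ‖x‖ + b ≤ φ x) :
    ∃ x₀, ∀ x, φ x₀ ≤ φ x := by
  apply hc.exists_forall_le
  have hq : Filter.Tendsto (fun r : ℝ => a * r ^ 2 - K * r + b) Filter.atTop Filter.atTop := by
    have h1 : Filter.Tendsto (fun r : ℝ => a * r + -K) Filter.atTop Filter.atTop :=
      Filter.tendsto_atTop_add_const_right _ _ (Filter.tendsto_id.const_mul_atTop ha)
    have h2 : Filter.Tendsto (fun r : ℝ => (a * r + -K) * r + b) Filter.atTop Filter.atTop :=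
      Filter.tendsto_atTop_add_const_right _ _ (h1.atTop_mul_atTop₀ Filter.tendsto_id)
    refine h2.congr (fun r => by ring)
  have hnorm : Filter.Tendsto (fun x : EuclideanSpace ℝ (Fin n) => ‖x‖)
      (Filter.cocompact _) Filter.atTop := tendsto_norm_cocompact_atTop
  exact Filter.tendsto_atTop_mono (fun x => h x) (hq.comp hnorm)

end Min

section Smooth
variable {F : Type*} [NormedAddCommGroup F] [InnerProductSpace ℝ F] [CompleteSpace F]

lemma smooth_upper_bound {h : F → ℝ} {G : F → F} (hG : ∀ x, HasGradientAt h (G x) x)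
    (a d : F) (M : ℝ)
    (hbound : ∀ t : ℝ, t ∈ Set.Icc (0:ℝ) 1 → ⟪G (a + t • d) - G a, d⟫ ≤ t * M) :
    h (a + d) ≤ h a + ⟪G a, d⟫ + M / 2 := by
  set ψ : ℝ → ℝ := fun t => h (a + t • d) - t * ⟪G a, d⟫ - t ^ 2 * M / 2 with hψ
  have hψd : ∀ t : ℝ, HasDerivAt ψ (⟪G (a + t • d), d⟫ - ⟪G a, d⟫ - t * M) t := by
    intro t
    have h1 := hasDerivAt_line hG a d t
    have h2 : HasDerivAt (fun t : ℝ => t * ⟪G a, d⟫) ⟪G a, d⟫ t := by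
      simpa using (hasDerivAt_id t).mul_const ⟪G a, d⟫
    have h3 : HasDerivAt (fun t : ℝ => t ^ 2 * M / 2) (t * M) t := by
      have := ((hasDerivAt_pow 2 t).mul_const M).div_const 2
      simpa using this.congr_deriv (by ring)
    exact (h1.sub h2).sub h3
  have hanti : AntitoneOn ψ (Set.Icc 0 1) := by
    apply antitoneOn_of_deriv_nonpos (convex_Icc 0 1)
    · exact (fun t _ => ((hψd t).continuousAt.continuousWithinAt))
    · intro t ht
      exact ((hψd t).differentiableAt).differentiableWithinAt
    · intro t ht
      rw [(hψd t).deriv]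
      rw [interior_Icc] at ht
      have ht' : t ∈ Set.Icc (0:ℝ) 1 := Set.mem_Icc_of_Ioo ht
      have := hbound t ht'
      rw [inner_sub_left] at this
      linarith
  have h01 := hanti (Set.left_mem_Icc.mpr zero_le_one) (Set.right_mem_Icc.mpr zero_le_one) zero_le_one
  simp only [hψ, zero_smul, add_zero, one_smul, zero_mul, one_mul, zero_pow, one_pow] at h01
  norm_num at h01
  linarith

end Smooth

section HB
variable {n : ℕ} {N Nd : EuclideanSpace ℝ (Fin n) → ℝ}

lemma exists_dual_attain (hN0 : ∀ x, 0 ≤ N x) (hNzero : ∀ x, N x = 0 ↔ x = 0)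
    (hNsmul : ∀ (c : ℝ) (x), N (c • x) = |c| * N x)
    (hNadd : ∀ x y, N (x + y) ≤ N x + N y)
    (hNd : ∀ s, IsLUB {r | ∃ x, N x ≤ 1 ∧ r = ⟪x, s⟫} (Nd s))
    (z : EuclideanSpace ℝ (Fin n)) :
    ∃ s, ⟪z, s⟫ = N z ∧ Nd s ≤ 1 := by
  rcases eq_or_ne z 0 with hz | hz
  · refine ⟨0, by simp [hz, (hNzero 0).mpr rfl], ?_⟩
    apply (hNd 0).2
    rintro r ⟨x, hx, rfl⟩
    simp
  · have H : ∀ c : ℝ, c • z = 0 → c • (N z) = 0 := by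
      intro c hc
      rcases smul_eq_zero.mp hc with h | h
      · simp [h]
      · exact absurd h hz
    set fp := LinearPMap.mkSpanSingleton' (σ := RingHom.id ℝ) z (N z) H with hfp
    have hdom : fp.domain = Submodule.span ℝ {z} := rfl
    have hfle : ∀ xp : fp.domain, fp xp ≤ N xp := by
      rintro ⟨xv, hxv⟩
      rw [hdom] at hxv
      obtain ⟨c, rfl⟩ := Submodule.mem_span_singleton.mp hxv
      have happ : fp ⟨c • z, hxv⟩ = c • (N z) := LinearPMap.mkSpanSingleton'_apply z (N z) H c _
      rw [happ, hNsmul]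
      have : c ≤ |c| := le_abs_self c
      have hNz := hN0 z
      simp only [smul_eq_mul]
      nlinarith
    obtain ⟨g, hg1, hg2⟩ := exists_extension_of_le_sublinear fp N
      (fun c hc x => by rw [hNsmul, abs_of_pos hc]) hNadd hfle
    have hgz : g z = N z := by
      have hmem : z ∈ fp.domain := by
        rw [hdom]; exact Submodule.mem_span_singleton_self z
      have := hg1 ⟨z, hmem⟩
      rw [this]
      exact LinearPMap.mkSpanSingleton'_apply_self z (N z) H hmem
    set s := (InnerProductSpace.toDual ℝ (EuclideanSpace ℝ (Fin n))).symm
      (LinearMap.toContinuousLinearMap g) with hs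
    have hsx : ∀ x, ⟪x, s⟫ = g x := by
      intro x
      rw [real_inner_comm]
      exact InnerProductSpace.toDual_symm_apply
    refine ⟨s, by rw [hsx z, hgz], ?_⟩
    apply (hNd s).2
    rintro r ⟨x, hx, rfl⟩
    rw [hsx x]
    exact le_trans (hg2 x) hx

end HB

theorem stmt0' {n : ℕ}
    (f fstar : EuclideanSpace ℝ (Fin n) → ℝ)
    (N Nd : EuclideanSpace ℝ (Fin n) → ℝ)
    (hN0 : ∀ x, 0 ≤ N x)
    (hNzero : ∀ x, N x = 0 ↔ x = 0)
    (hNsmul : ∀ (c : ℝ) (x), N (c • x) = |c| * N x)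
    (hNadd : ∀ x y, N (x + y) ≤ N x + N y)
    (hNd : ∀ s, IsLUB {r | ∃ x, N x ≤ 1 ∧ r = ⟪x, s⟫} (Nd s))
    (hfstar : ∀ u, IsLUB {r | ∃ x, r = ⟪x, u⟫ - f x} (fstar u))
    (hconv : ConvexOn ℝ Set.univ f)
    (hclosed : LowerSemicontinuous f)
    (gf gfs : EuclideanSpace ℝ (Fin n) → EuclideanSpace ℝ (Fin n))
    (hgf : ∀ x, HasGradientAt f (gf x) x)
    (hgfs : ∀ u, HasGradientAt fstar (gfs u) u)
    (γ : ℝ) (hγ : 0 < γ) :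
    (∀ x y, f x - f y - ⟪gf y, x - y⟫ ≥ γ / 2 * (N (x - y)) ^ 2)
      ↔ (∀ u v, N (gfs u - gfs v) ≤ (1 / γ) * Nd (u - v)) := by
  have hfsub : ∀ (x u : EuclideanSpace ℝ (Fin n)), ⟪x, u⟫ - f x ≤ fstar u :=
    fun x u => (hfstar u).1 ⟨x, rfl⟩
  have hNneg : ∀ x : EuclideanSpace ℝ (Fin n), N (-x) = N x := by
    intro x
    simpa using hNsmul (-1) x
  constructor
  · -- strong convexity → smoothness of conjugate
    intro hsc u v
    -- Step 1: gf (gfs u) = u for all u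
    have key : ∀ u, gf (gfs u) = u := by
      intro u
      have hfc : Continuous f :=
        continuous_iff_continuousAt.mpr (fun x => (hgf x).hasFDerivAt.continuousAt)
      obtain ⟨c, hc, hlb⟩ := N_lower hN0 hNzero hNsmul hNadd
      set φ : EuclideanSpace ℝ (Fin n) → ℝ := fun x => f x - ⟪u, x⟫ with hφ
      have hφc : Continuous φ := hfc.sub (continuous_const.inner continuous_id)
      have hquad : ∀ x, (γ / 2 * c ^ 2) * ‖x‖ ^ 2 - ‖gf 0 - u‖ * ‖x‖ + f 0 ≤ φ x := by
        intro x
        have h1 := hsc x 0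
        simp only [sub_zero] at h1
        have h2 : c * ‖x‖ ≤ N x := hlb x
        have h3 : γ / 2 * (c * ‖x‖) ^ 2 ≤ γ / 2 * (N x) ^ 2 := by
          have hnn := mul_nonneg hc.le (norm_nonneg x)
          have := pow_le_pow_left₀ hnn h2 2
          nlinarith
        have h4 : ⟪gf 0, x⟫ - ⟪u, x⟫ = ⟪gf 0 - u, x⟫ := (inner_sub_left _ _ _).symm
        have h5 : -(‖gf 0 - u‖ * ‖x‖) ≤ ⟪gf 0 - u, x⟫ := by
          have := abs_real_inner_le_norm (gf 0 - u) x
          have := neg_abs_le (⟪gf 0 - u, x⟫ : ℝ)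
          linarith [abs_real_inner_le_norm (gf 0 - u) x]
        simp only [hφ]
        nlinarith
      obtain ⟨x₀, hx₀⟩ := exists_min_of_quadratic_lb φ hφc _ _ _ (by positivity) hquad
      -- gf x₀ = u
      have hgfx₀ : gf x₀ = u := grad_eq_of_min_sub (hgf x₀) hx₀
      -- fstar u is attained at x₀
      have hmax : ∀ r ∈ {r | ∃ x, r = ⟪x, u⟫ - f x}, r ≤ ⟪x₀, u⟫ - f x₀ := by
        rintro r ⟨w, rfl⟩
        have h1 := hx₀ w
        simp only [hφ] at h1
        have h2 : ⟪u, w⟫ = ⟪w, u⟫ := real_inner_comm w u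
        have h3 : ⟪u, x₀⟫ = ⟪x₀, u⟫ := real_inner_comm x₀ u
        linarith
      have hval : fstar u = ⟪x₀, u⟫ - f x₀ :=
        isLUB_eq_of_greatest (hfstar u) ⟨x₀, rfl⟩ hmax
      -- gfs u = x₀
      have hgfsu : gfs u = x₀ := by
        apply grad_eq_of_min_sub (hgfs u)
        intro w
        have h1 : ⟪x₀, w⟫ - f x₀ ≤ fstar w := hfsub x₀ w
        rw [hval]
        linarith
      rw [hgfsu, hgfx₀]
    -- Step 2: gradient monotonicity
    have mono : ∀ x y, γ * (N (x - y)) ^ 2 ≤ ⟪gf x - gf y, x - y⟫ := by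
      intro x y
      have h1 := hsc x y
      have h2 := hsc y x
      have h3 : N (y - x) = N (x - y) := by rw [← hNneg (y - x), neg_sub]
      have h4 : ⟪gf x - gf y, x - y⟫ = ⟪gf x, x - y⟫ - ⟪gf y, x - y⟫ :=
        inner_sub_left _ _ _
      have h5 : ⟪gf x, y - x⟫ = -⟪gf x, x - y⟫ := by
        rw [← inner_neg_right, neg_sub]
      rw [h3] at h2
      rw [h5] at h2
      linarith
    -- Step 3: conclude
    have h1 := mono (gfs u) (gfs v)
    rw [key u, key v] at h1
    have h2 : ⟪gfs u - gfs v, u - v⟫ ≤ N (gfs u - gfs v) * Nd (u - v) :=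
      gen_cauchy_schwarz hN0 hNzero hNsmul hNd _ _
    have h3 : ⟪u - v, gfs u - gfs v⟫ = ⟪gfs u - gfs v, u - v⟫ := real_inner_comm _ _
    rw [h3] at h1
    have hNdnn := Nd_nonneg hN0 hNzero hNd (u - v)
    rcases eq_or_lt_of_le (hN0 (gfs u - gfs v)) with h0 | hpos
    · rw [← h0]
      positivity
    · rw [one_div, inv_mul_eq_div, le_div_iff₀ hγ]
      nlinarith
  · -- smoothness of conjugate → strong convexity
    intro hsm x y
    have hgrad : ∀ w z, f z + ⟪gf z, w - z⟫ ≤ f w :=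
      fun w z => convex_grad_ineq hconv hgf w z
    set z := x - y with hz
    -- fstar (gf y) = ⟪y, gf y⟫ - f y
    have hfsval : fstar (gf y) = ⟪y, gf y⟫ - f y := by
      apply isLUB_eq_of_greatest (hfstar (gf y)) ⟨y, rfl⟩
      rintro r ⟨w, rfl⟩
      have h1 := hgrad w y
      have h2 : ⟪gf y, w - y⟫ = ⟪w, gf y⟫ - ⟪y, gf y⟫ := by
        rw [real_inner_comm, inner_sub_left]
      linarith
    -- gfs (gf y) = y
    have hgfsy : gfs (gf y) = y := by
      apply grad_eq_of_min_sub (hgfs (gf y))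
      intro w
      have h1 : ⟪y, w⟫ - f y ≤ fstar w := hfsub y w
      rw [hfsval]
      linarith
    -- dual attaining functional
    obtain ⟨s, hs1, hs2⟩ := exists_dual_attain hN0 hNzero hNsmul hNadd hNd z
    set s' := (γ * N z) • s with hs'
    have hγN : 0 ≤ γ * N z := mul_nonneg hγ.le (hN0 z)
    have hNds'0 := Nd_nonneg hN0 hNzero hNd s'
    have hNds0 := Nd_nonneg hN0 hNzero hNd s
    have hNds' : Nd s' ≤ γ * N z := by
      have := Nd_smul_le hN0 hNzero hNd hγN s
      nlinarith
    -- smoothness upper bound on fstar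
    have hb : ∀ t : ℝ, t ∈ Set.Icc (0:ℝ) 1 →
        ⟪gfs (gf y + t • s') - gfs (gf y), s'⟫ ≤ t * ((Nd s') ^ 2 / γ) := by
      intro t ht
      have hcs := gen_cauchy_schwarz hN0 hNzero hNsmul hNd
        (gfs (gf y + t • s') - gfs (gf y)) s'
      have hlip := hsm (gf y + t • s') (gf y)
      have hd : gf y + t • s' - gf y = t • s' := by abel
      rw [hd] at hlip
      have hts' : Nd (t • s') ≤ t * Nd s' := Nd_smul_le hN0 hNzero hNd ht.1 s'
      have hNnn := hN0 (gfs (gf y + t • s') - gfs (gf y))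
      calc ⟪gfs (gf y + t • s') - gfs (gf y), s'⟫
          ≤ N (gfs (gf y + t • s') - gfs (gf y)) * Nd s' := hcs
        _ ≤ ((1 / γ) * Nd (t • s')) * Nd s' := mul_le_mul_of_nonneg_right hlip hNds'0
        _ ≤ ((1 / γ) * (t * Nd s')) * Nd s' := by
            apply mul_le_mul_of_nonneg_right _ hNds'0
            apply mul_le_mul_of_nonneg_left hts' (by positivity)
        _ = t * ((Nd s') ^ 2 / γ) := by ring
    have hsmooth := smooth_upper_bound hgfs (gf y) s' ((Nd s') ^ 2 / γ) hb
    rw [hgfsy] at hsmooth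
    -- combine
    have hfx := hfsub x (gf y + s')
    have hinner1 : ⟪x, gf y + s'⟫ = ⟪x, gf y⟫ + ⟪x, s'⟫ := inner_add_right _ _ _
    have hinner2 : ⟪x, s'⟫ - ⟪y, s'⟫ = ⟪z, s'⟫ := by
      rw [hz, inner_sub_left]
    have hinner3 : ⟪z, s'⟫ = (γ * N z) * (N z) := by
      rw [hs', real_inner_smul_right, hs1]
    have hinner4 : ⟪gf y, x - y⟫ = ⟪x, gf y⟫ - ⟪y, gf y⟫ := by
      rw [real_inner_comm, inner_sub_left]
    have hsq : (Nd s') ^ 2 ≤ (γ * N z) ^ 2 := by nlinarith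
    have hfin : (Nd s') ^ 2 / γ / 2 ≤ γ * (N z) ^ 2 / 2 := by
      rw [div_div, div_le_iff₀ (by positivity : (0:ℝ) < γ * 2)]
      nlinarith
    rw [ge_iff_le]
    calc γ / 2 * (N (x - y)) ^ 2
        = (γ * N z) * N z - γ * (N z) ^ 2 / 2 := by rw [← hz]; ring
      _ ≤ (γ * N z) * N z - (Nd s') ^ 2 / γ / 2 := by linarith
      _ ≤ f x - f y - ⟪gf y, x - y⟫ := by
          rw [hinner4, ← hinner3, ← hinner2]
          have := hfsval
          linarith [hfx, hsmooth, hinner1.symm ▸ hfx]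


/-- **Kakade–Shalev-Shwartz–Tewari duality**: a closed convex function `f` on `ℝⁿ` is
`γ`-strongly convex w.r.t. a norm `N` iff its Fenchel–Legendre conjugate `fstar` is
`(1/γ)`-Lipschitz smooth w.r.t. the dual norm `Nd`. -/
theorem stmt0 {n : ℕ}
    (f fstar : EuclideanSpace ℝ (Fin n) → ℝ)
    (N Nd : EuclideanSpace ℝ (Fin n) → ℝ)
    (hN0 : ∀ x, 0 ≤ N x)
    (hNzero : ∀ x, N x = 0 ↔ x = 0)
    (hNsmul : ∀ (c : ℝ) (x), N (c • x) = |c| * N x)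
    (hNadd : ∀ x y, N (x + y) ≤ N x + N y)
    (hNd : ∀ s, IsLUB {r | ∃ x, N x ≤ 1 ∧ r = ⟪x, s⟫} (Nd s))
    (hfstar : ∀ u, IsLUB {r | ∃ x, r = ⟪x, u⟫ - f x} (fstar u))
    (hconv : ConvexOn ℝ Set.univ f)
    (hclosed : LowerSemicontinuous f)
    (gf gfs : EuclideanSpace ℝ (Fin n) → EuclideanSpace ℝ (Fin n))
    (hgf : ∀ x, HasGradientAt f (gf x) x)
    (hgfs : ∀ u, HasGradientAt fstar (gfs u) u)
    (γ : ℝ) (hγ : 0 < γ) :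
    (∀ x y, f x - f y - ⟪gf y, x - y⟫ ≥ γ / 2 * (N (x - y)) ^ 2)
      ↔ (∀ u v, N (gfs u - gfs v) ≤ (1 / γ) * Nd (u - v)) := by
  exact stmt0' f fstar N Nd hN0 hNzero hNsmul hNadd hNd hfstar hconv hclosed
    gf gfs hgf hgfs γ hγ
end

section
/- Let f(x) be continuous and γ-strongly convex with respect to a norm ‖·‖ on a set X, and let A be a matrix. Then φ(u) = max_{x ∈ X} (⟨Ax, u⟩ − f(x)) is (λ_max(AᵀA)/γ)-Lipschitz smooth with respect to the dual norm ‖·‖_*. -/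
open RealInnerProductSpace Topology Matrix

/-- Rayleigh-type bound: the quadratic form of a Hermitian matrix is bounded by the
largest eigenvalue times the squared norm. -/
lemma aux_rayleigh {n : ℕ} (M : Matrix (Fin n) (Fin n) ℝ) (hM : M.IsHermitian)
    (lmax : ℝ) (hl : ∀ i, hM.eigenvalues i ≤ lmax)
    (y : EuclideanSpace ℝ (Fin n)) :
    ⟪y, (WithLp.equiv 2 (Fin n → ℝ)).symm (M.mulVec y)⟫ ≤ lmax * ‖y‖ ^ 2 := by
  set b := hM.eigenvectorBasis with hb
  have hsym := (Matrix.isHermitian_iff_isSymmetric.1 hM)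
  set T := Matrix.toEuclideanLin M with hT
  have hTy : (WithLp.equiv 2 (Fin n → ℝ)).symm (M.mulVec y) = T y := by
    rw [Matrix.toEuclideanLin_apply]; rfl
  rw [hTy]
  have hTb : ∀ i, T (b i) = hM.eigenvalues i • b i := by
    intro i
    have := hM.mulVec_eigenvectorBasis i
    apply (WithLp.equiv 2 (Fin n → ℝ)).injective
    rw [WithLp.equiv_apply, Matrix.ofLp_toEuclideanLin_apply]
    exact this
  have key : ⟪y, T y⟫ = ∑ i, hM.eigenvalues i * (⟪b i, y⟫)^2 := by
    rw [← b.sum_inner_mul_inner y (T y)]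
    congr 1; ext i
    have : ⟪b i, T y⟫ = ⟪T (b i), y⟫ := (hsym (b i) y).symm
    rw [this, hTb i, real_inner_smul_left, real_inner_comm y (b i)]
    ring
  have norm_eq : ‖y‖ ^ 2 = ∑ i, (⟪b i, y⟫)^2 := by
    rw [← real_inner_self_eq_norm_sq, ← b.sum_inner_mul_inner y y]
    congr 1; ext i; rw [real_inner_comm y (b i)]; ring
  rw [key, norm_eq, Finset.mul_sum]
  apply Finset.sum_le_sum
  intro i _
  nlinarith [hl i, sq_nonneg (⟪b i, y⟫)]

/-- A gradient must coincide with any (global) subgradient. -/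
lemma aux_grad {m : ℕ} {φ : EuclideanSpace ℝ (Fin m) → ℝ} {g s u : EuclideanSpace ℝ (Fin m)}
    (hg : HasGradientAt φ g u) (hs : ∀ v, φ u + ⟪s, v - u⟫ ≤ φ v) : g = s := by
  have hF : HasFDerivAt φ (InnerProductSpace.toDual ℝ _ g) u := hg
  have key : ∀ w : EuclideanSpace ℝ (Fin m), ⟪g - s, w⟫ = 0 := by
    intro w
    have hc : HasDerivAt (fun t : ℝ => u + t • w) w 0 := by
      simpa using ((hasDerivAt_id (0:ℝ)).smul_const w).const_add u
    have hF' : HasFDerivAt φ (InnerProductSpace.toDual ℝ _ g) ((fun t : ℝ => u + t • w) 0) := by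
      simpa using hF
    have hcomp : HasDerivAt (fun t : ℝ => φ (u + t • w)) ⟪g, w⟫ 0 := by
      have := hF'.comp_hasDerivAt 0 hc
      simpa [InnerProductSpace.toDual_apply_apply, Function.comp_def] using this
    have hlin : HasDerivAt (fun t : ℝ => t * ⟪s, w⟫) ⟪s, w⟫ 0 := by
      simpa using (hasDerivAt_id (0:ℝ)).mul_const ⟪s, w⟫
    have hh : HasDerivAt (fun t : ℝ => φ (u + t • w) - t * ⟪s, w⟫) (⟪g, w⟫ - ⟪s, w⟫) 0 :=
      hcomp.sub hlin
    have hmin : IsLocalMin (fun t : ℝ => φ (u + t • w) - t * ⟪s, w⟫) 0 := by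
      apply Filter.Eventually.of_forall
      intro t
      have := hs (u + t • w)
      simp only [add_sub_cancel_left, real_inner_smul_right] at this
      simp only [zero_smul, add_zero, zero_mul, sub_zero]
      linarith
    have := hmin.hasDerivAt_eq_zero hh
    rw [inner_sub_left]; linarith [this]
  have := key (g - s)
  rw [inner_self_eq_zero] at this
  exact sub_eq_zero.1 this

/-- Minimizers of (strongly convex) + (affine) perturbations satisfy a quadratic growth bound. -/
lemma aux_strong_min {n : ℕ} {X : Set (EuclideanSpace ℝ (Fin n))}
    {f : EuclideanSpace ℝ (Fin n) → ℝ} {γ : ℝ}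
    (hsc : StrongConvexOn X γ f) (F : EuclideanSpace ℝ (Fin n) → ℝ)
    (ℓ : EuclideanSpace ℝ (Fin n) → ℝ)
    (hℓ : ∀ (a b : ℝ) (x y : EuclideanSpace ℝ (Fin n)), ℓ (a • x + b • y) = a * ℓ x + b * ℓ y)
    (hF : ∀ z, F z = f z - ℓ z) {x y : EuclideanSpace ℝ (Fin n)} (hx : x ∈ X) (hy : y ∈ X)
    (hmin : ∀ z ∈ X, F x ≤ F z) : F x + γ / 2 * ‖y - x‖ ^ 2 ≤ F y := by
  set c := γ / 2 * ‖x - y‖ ^ 2 with hc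
  have step : ∀ b ∈ Set.Ioo (0:ℝ) 1, F x + (1 - b) * c ≤ F y := by
    rintro b ⟨hb0, hb1⟩
    set a := 1 - b with ha
    have ha0 : (0:ℝ) ≤ a := by linarith
    have hb0' : (0:ℝ) ≤ b := le_of_lt hb0
    have hab : a + b = 1 := by ring
    have hz : a • x + b • y ∈ X := hsc.1 hx hy ha0 hb0' hab
    have hconv := hsc.2 hx hy ha0 hb0' hab
    simp only [smul_eq_mul] at hconv
    have hm := hmin _ hz
    simp only [hF] at hm ⊢
    have hℓz := hℓ a b x y
    have h1 : f x - ℓ x ≤ a * (f x - ℓ x) + b * (f y - ℓ y) - a * b * c := by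
      calc f x - ℓ x ≤ f (a • x + b • y) - ℓ (a • x + b • y) := hm
        _ = f (a • x + b • y) - (a * ℓ x + b * ℓ y) := by rw [hℓz]
        _ ≤ a * f x + b * f y - a * b * (γ / 2 * ‖x - y‖ ^ 2) - (a * ℓ x + b * ℓ y) := by
            linarith
        _ = a * (f x - ℓ x) + b * (f y - ℓ y) - a * b * c := by rw [hc]; ring
    rw [ha] at h1 ⊢
    have h2 : b * (f x - ℓ x + (1 - b) * c) ≤ b * (f y - ℓ y) := by nlinarith [h1]
    have := (mul_le_mul_iff_right₀ hb0).1 h2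
    linarith
  have hev : ∀ᶠ b in 𝓝[>] (0:ℝ), F x + (1 - b) * c ≤ F y := by
    filter_upwards [Ioo_mem_nhdsGT_of_mem (Set.mem_Ico.2 ⟨le_refl 0, zero_lt_one⟩)] with b hb
    exact step b hb
  have htend : Filter.Tendsto (fun b : ℝ => F x + (1 - b) * c) (𝓝[>] (0:ℝ))
      (𝓝 (F x + (1 - 0) * c)) := by
    apply Filter.Tendsto.mono_left _ nhdsWithin_le_nhds
    exact (Continuous.tendsto (by continuity) 0)
  have := le_of_tendsto htend hev
  simp only [sub_zero, one_mul] at this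
  rw [hc, norm_sub_rev] at this
  linarith

/-- If `f` is continuous and `γ`-strongly convex on `X`, then
`φ(u) = max_{x ∈ X} (⟨Ax, u⟩ − f(x))` is `(λ_max(AᵀA)/γ)`-Lipschitz smooth
(w.r.t. the Euclidean norm, which is its own dual norm). -/
theorem stmt1 {n m : ℕ}
    (X : Set (EuclideanSpace ℝ (Fin n))) (hX : X.Nonempty) (hXconv : Convex ℝ X)
    (f : EuclideanSpace ℝ (Fin n) → ℝ) (hf : ContinuousOn f X)
    (γ : ℝ) (hγ : 0 < γ) (hsc : StrongConvexOn X γ f)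
    (A : Matrix (Fin m) (Fin n) ℝ)
    (hH : (A.transpose * A).IsHermitian)
    (lmax : ℝ) (hlmax : IsGreatest (Set.range hH.eigenvalues) lmax)
    (φ : EuclideanSpace ℝ (Fin m) → ℝ)
    (hφ : ∀ u, IsGreatest
      {r | ∃ x ∈ X, r = ⟪(WithLp.equiv 2 (Fin m → ℝ)).symm (A.mulVec x), u⟫ - f x} (φ u))
    (gφ : EuclideanSpace ℝ (Fin m) → EuclideanSpace ℝ (Fin m))
    (hgφ : ∀ u, HasGradientAt φ (gφ u) u) :
    ∀ u v, ‖gφ u - gφ v‖ ≤ lmax / γ * ‖u - v‖ := by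
  intro u v
  obtain ⟨⟨xu, hxu, hphiu⟩, hubu⟩ := hφ u
  obtain ⟨⟨xv, hxv, hphiv⟩, hubv⟩ := hφ v
  -- λ_max is nonnegative
  have hpsd : (A.transpose * A).PosSemidef := by
    rw [← Matrix.conjTranspose_eq_transpose_of_trivial]
    exact Matrix.posSemidef_conjTranspose_mul_self A
  have hlm0 : 0 ≤ lmax := by
    obtain ⟨i, hi⟩ := hlmax.1
    rw [← hi]
    exact hpsd.eigenvalues_nonneg i
  have hl : ∀ i, hH.eigenvalues i ≤ lmax := fun i => hlmax.2 ⟨i, rfl⟩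
  -- gradient identification
  have hgrad : ∀ (w : EuclideanSpace ℝ (Fin m)) (x : EuclideanSpace ℝ (Fin n)), x ∈ X →
      φ w = ⟪(WithLp.equiv 2 (Fin m → ℝ)).symm (A.mulVec x), w⟫ - f x →
      gφ w = (WithLp.equiv 2 (Fin m → ℝ)).symm (A.mulVec x) := by
    intro w x hxX hphi
    apply aux_grad (hgφ w)
    intro z
    have h1 : ⟪(WithLp.equiv 2 (Fin m → ℝ)).symm (A.mulVec x), z⟫ - f x ≤ φ z :=
      (hφ z).2 ⟨x, hxX, rfl⟩
    have h2 : ⟪(WithLp.equiv 2 (Fin m → ℝ)).symm (A.mulVec x), z - w⟫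
        = ⟪(WithLp.equiv 2 (Fin m → ℝ)).symm (A.mulVec x), z⟫
          - ⟪(WithLp.equiv 2 (Fin m → ℝ)).symm (A.mulVec x), w⟫ := inner_sub_right _ _ _
    rw [hphi, h2]
    linarith
  have hgu : gφ u = (WithLp.equiv 2 (Fin m → ℝ)).symm (A.mulVec xu) := hgrad u xu hxu hphiu
  have hgv : gφ v = (WithLp.equiv 2 (Fin m → ℝ)).symm (A.mulVec xv) := hgrad v xv hxv hphiv
  -- the affine parts are affine
  have hlin : ∀ (w : EuclideanSpace ℝ (Fin m)) (a b : ℝ) (x y : EuclideanSpace ℝ (Fin n)),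
      ⟪(WithLp.equiv 2 (Fin m → ℝ)).symm (A.mulVec (a • x + b • y)), w⟫
        = a * ⟪(WithLp.equiv 2 (Fin m → ℝ)).symm (A.mulVec x), w⟫
          + b * ⟪(WithLp.equiv 2 (Fin m → ℝ)).symm (A.mulVec y), w⟫ := by
    intro w a b x y
    have hmv : A.mulVec (a • x + b • y) = a • A.mulVec x + b • A.mulVec y := by
      rw [Matrix.mulVec_add, Matrix.mulVec_smul, Matrix.mulVec_smul]
    rw [hmv]
    have : (WithLp.equiv 2 (Fin m → ℝ)).symm (a • A.mulVec x + b • A.mulVec y)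
        = a • (WithLp.equiv 2 (Fin m → ℝ)).symm (A.mulVec x)
          + b • (WithLp.equiv 2 (Fin m → ℝ)).symm (A.mulVec y) := rfl
    rw [this, inner_add_left, real_inner_smul_left, real_inner_smul_left]
  -- quadratic growth at both minimizers
  have hqu : (f xu - ⟪(WithLp.equiv 2 (Fin m → ℝ)).symm (A.mulVec xu), u⟫)
      + γ / 2 * ‖xv - xu‖ ^ 2
      ≤ f xv - ⟪(WithLp.equiv 2 (Fin m → ℝ)).symm (A.mulVec xv), u⟫ := by
    apply aux_strong_min hsc
      (fun z => f z - ⟪(WithLp.equiv 2 (Fin m → ℝ)).symm (A.mulVec z), u⟫)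
      (fun z => ⟪(WithLp.equiv 2 (Fin m → ℝ)).symm (A.mulVec z), u⟫)
      (fun a b x y => hlin u a b x y) (fun z => rfl) hxu hxv
    intro z hz
    have := hubu ⟨z, hz, rfl⟩
    rw [hphiu] at this
    linarith
  have hqv : (f xv - ⟪(WithLp.equiv 2 (Fin m → ℝ)).symm (A.mulVec xv), v⟫)
      + γ / 2 * ‖xu - xv‖ ^ 2
      ≤ f xu - ⟪(WithLp.equiv 2 (Fin m → ℝ)).symm (A.mulVec xu), v⟫ := by
    apply aux_strong_min hsc
      (fun z => f z - ⟪(WithLp.equiv 2 (Fin m → ℝ)).symm (A.mulVec z), v⟫)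
      (fun z => ⟪(WithLp.equiv 2 (Fin m → ℝ)).symm (A.mulVec z), v⟫)
      (fun a b x y => hlin v a b x y) (fun z => rfl) hxv hxu
    intro z hz
    have := hubv ⟨z, hz, rfl⟩
    rw [hphiv] at this
    linarith
  -- set up the difference vectors
  set d : EuclideanSpace ℝ (Fin n) := xu - xv with hd
  set D : EuclideanSpace ℝ (Fin m) := (WithLp.equiv 2 (Fin m → ℝ)).symm (A.mulVec d) with hD
  have hmvd : A.mulVec d = A.mulVec xu - A.mulVec xv := Matrix.mulVec_sub A _ _
  have hDsplit : D = (WithLp.equiv 2 (Fin m → ℝ)).symm (A.mulVec xu)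
      - (WithLp.equiv 2 (Fin m → ℝ)).symm (A.mulVec xv) := by
    rw [hD, hmvd]; rfl
  have hgdiff : gφ u - gφ v = D := by
    rw [hgu, hgv, hDsplit]
  -- strong monotonicity : γ ‖d‖² ≤ ⟪D, u - v⟫
  have hnorm_eq : ‖xv - xu‖ = ‖xu - xv‖ := norm_sub_rev _ _
  have hmono : γ * ‖d‖ ^ 2 ≤ ⟪D, u - v⟫ := by
    have hexp : ⟪D, u - v⟫
        = (⟪(WithLp.equiv 2 (Fin m → ℝ)).symm (A.mulVec xu), u⟫
          - ⟪(WithLp.equiv 2 (Fin m → ℝ)).symm (A.mulVec xv), u⟫)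
          - (⟪(WithLp.equiv 2 (Fin m → ℝ)).symm (A.mulVec xu), v⟫
          - ⟪(WithLp.equiv 2 (Fin m → ℝ)).symm (A.mulVec xv), v⟫) := by
      rw [hDsplit, inner_sub_left, inner_sub_right, inner_sub_right]
      ring
    rw [hexp, hd]
    rw [hnorm_eq] at hqu
    nlinarith [hqu, hqv]
  -- Cauchy–Schwarz
  have hCS : ⟪D, u - v⟫ ≤ ‖D‖ * ‖u - v‖ := real_inner_le_norm D (u - v)
  -- Rayleigh quotient bound : ‖D‖² ≤ lmax ‖d‖²
  have hdot : ((WithLp.equiv 2 (Fin n → ℝ) d) ⬝ᵥ ((A.transpose * A).mulVec d)) = (A.mulVec d) ⬝ᵥ (A.mulVec d) := by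
    rw [← Matrix.mulVec_mulVec, Matrix.dotProduct_mulVec, Matrix.vecMul_transpose]
    rfl
  have hDsq : ‖D‖ ^ 2 = ⟪d, (WithLp.equiv 2 (Fin n → ℝ)).symm ((A.transpose * A).mulVec d)⟫ := by
    rw [← real_inner_self_eq_norm_sq]
    have h1 : ⟪D, D⟫ = (A.mulVec d) ⬝ᵥ (A.mulVec d) := by
      rw [hD, real_inner_self_eq_norm_sq, EuclideanSpace.real_norm_sq_eq]; simp [dotProduct, sq]
    have h2 : ⟪d, (WithLp.equiv 2 (Fin n → ℝ)).symm ((A.transpose * A).mulVec d)⟫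
        = (WithLp.equiv 2 (Fin n → ℝ) d) ⬝ᵥ ((A.transpose * A).mulVec d) := by
      simp [PiLp.inner_apply, RCLike.inner_apply, dotProduct, mul_comm]
    rw [h1, h2, hdot]
  have hray : ‖D‖ ^ 2 ≤ lmax * ‖d‖ ^ 2 := by
    rw [hDsq]
    exact aux_rayleigh _ hH lmax hl d
  -- conclude
  rw [hgdiff]
  rcases eq_or_lt_of_le (norm_nonneg D) with hD0 | hDpos
  · rw [← hD0]
    exact mul_nonneg (div_nonneg hlm0 hγ.le) (norm_nonneg _)
  · have h1 : γ * ‖d‖ ^ 2 ≤ ‖D‖ * ‖u - v‖ := le_trans hmono hCS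
    have h2 : γ * ‖D‖ ≤ lmax * ‖u - v‖ := by
      nlinarith [hray, h1, hlm0, hDpos, norm_nonneg (u - v), sq_nonneg (‖d‖)]
    rw [div_mul_eq_mul_div, le_div_iff₀ hγ]
    linarith
end

section
/- Let d be the vectorization of a cost matrix C ∈ ℝ₊^{n×n}, A ∈ {0,1}^{2n×n²} the incidence matrix with (Ax) = (π𝟏, πᵀ𝟏) for vectorized transport plan x, and b = (pᵀ, qᵀ)ᵀ for p, q ∈ Δₙ. Then the optimal transport cost satisfies W(p,q) = min_{x ∈ Δ_{n²}} max_{y ∈ [−1,1]^{2n}} ( dᵀx + 2‖d‖_∞ (yᵀAx − bᵀy) ). -/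
open Finset

private lemma minmul_aux {a b : ℝ} (ha : 0 ≤ a) (hb : 0 ≤ b) :
    min 1 (b / a) * a = min a b := by
  rcases eq_or_lt_of_le ha with h | h
  · simp [← h, min_eq_left hb]
  · rw [min_mul_of_nonneg _ _ ha, one_mul, div_mul_cancel₀ _ h.ne']

/-- Saddle-point (exact-penalty) reformulation of optimal transport:
`W(p,q) = min_{x ∈ Δ_{n²}} max_{y ∈ [−1,1]^{2n}} (dᵀx + 2‖d‖_∞(yᵀAx − bᵀy))`,
stated with the transport plan `π` in matrix form (`x` the vectorization of `π`,
`Ax = (π𝟏, πᵀ𝟏)`, `b = (p,q)`, `d` the vectorization of `C`, `‖d‖_∞ = max_{ij} C_{ij}`). -/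
theorem stmt10 {n : ℕ} (hn : 0 < n)
    (C : Matrix (Fin n) (Fin n) ℝ) (hC : ∀ i j, 0 ≤ C i j)
    (dmax : ℝ) (hdmax : IsGreatest {r | ∃ i j, r = C i j} dmax)
    (p q : Fin n → ℝ) (hp : p ∈ stdSimplex ℝ (Fin n)) (hq : q ∈ stdSimplex ℝ (Fin n))
    (W : ℝ)
    (hW : IsLeast {r | ∃ π : Matrix (Fin n) (Fin n) ℝ,
        (∀ i j, 0 ≤ π i j) ∧ (∀ i, ∑ j, π i j = p i) ∧ (∀ j, ∑ i, π i j = q j) ∧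
        r = ∑ i, ∑ j, C i j * π i j} W)
    (val : Matrix (Fin n) (Fin n) ℝ → ℝ)
    (hval : ∀ π : Matrix (Fin n) (Fin n) ℝ, IsGreatest
      {r | ∃ y₁ y₂ : Fin n → ℝ, (∀ i, |y₁ i| ≤ 1) ∧ (∀ j, |y₂ j| ≤ 1) ∧
        r = (∑ i, ∑ j, C i j * π i j) + 2 * dmax *
          ((∑ i, y₁ i * ((∑ j, π i j) - p i)) + (∑ j, y₂ j * ((∑ i, π i j) - q j)))}
      (val π)) :
    IsLeast {r | ∃ π : Matrix (Fin n) (Fin n) ℝ,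
      (∀ i j, 0 ≤ π i j) ∧ (∑ i, ∑ j, π i j) = 1 ∧ r = val π} W := by
  classical
  obtain ⟨i0, j0, hd0⟩ := hdmax.1
  have hdm : 0 ≤ dmax := hd0 ▸ hC i0 j0
  have hCle : ∀ i j, C i j ≤ dmax := fun i j => hdmax.2 ⟨i, j, rfl⟩
  constructor
  · -- W is attained
    obtain ⟨π, hπ0, hπr, hπc, hWc⟩ := hW.1
    refine ⟨π, hπ0, ?_, ?_⟩
    · calc (∑ i, ∑ j, π i j) = ∑ i, p i := by
            exact Finset.sum_congr rfl fun i _ => hπr i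
        _ = 1 := hp.2
    · obtain ⟨y₁, y₂, _, _, hr⟩ := (hval π).1
      rw [hr, hWc]
      simp [hπr, hπc]
  · -- lower bound
    rintro r ⟨π, hπ0, hπs, rfl⟩
    have hrr0 : ∀ i, (0:ℝ) ≤ ∑ j, π i j := fun i => Finset.sum_nonneg fun j _ => hπ0 i j
    set α : Fin n → ℝ := fun i => min 1 (p i / ∑ j, π i j) with hα
    have hα0 : ∀ i, 0 ≤ α i := fun i => le_min zero_le_one (div_nonneg (hp.1 i) (hrr0 i))
    have hα1 : ∀ i, α i ≤ 1 := fun i => min_le_left _ _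
    set π₁ : Matrix (Fin n) (Fin n) ℝ := fun i j => α i * π i j with hπ₁
    have hπ₁0 : ∀ i j, 0 ≤ π₁ i j := fun i j => mul_nonneg (hα0 i) (hπ0 i j)
    have hπ₁le : ∀ i j, π₁ i j ≤ π i j := fun i j => mul_le_of_le_one_left (hπ0 i j) (hα1 i)
    have hr₁ : ∀ i, ∑ j, π₁ i j = min (∑ j, π i j) (p i) := by
      intro i
      have h : ∑ j, π₁ i j = α i * ∑ j, π i j := by
        simp [hπ₁, Finset.mul_sum]
      rw [h, hα, minmul_aux (hrr0 i) (hp.1 i)]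
    have hc₁0 : ∀ j, (0:ℝ) ≤ ∑ i, π₁ i j := fun j => Finset.sum_nonneg fun i _ => hπ₁0 i j
    have hc₁le : ∀ j, (∑ i, π₁ i j) ≤ ∑ i, π i j := fun j =>
      Finset.sum_le_sum fun i _ => hπ₁le i j
    set β : Fin n → ℝ := fun j => min 1 (q j / ∑ i, π₁ i j) with hβ
    have hβ0 : ∀ j, 0 ≤ β j := fun j => le_min zero_le_one (div_nonneg (hq.1 j) (hc₁0 j))
    have hβ1 : ∀ j, β j ≤ 1 := fun j => min_le_left _ _
    set π₂ : Matrix (Fin n) (Fin n) ℝ := fun i j => π₁ i j * β j with hπ₂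
    have hπ₂0 : ∀ i j, 0 ≤ π₂ i j := fun i j => mul_nonneg (hπ₁0 i j) (hβ0 j)
    have hπ₂le₁ : ∀ i j, π₂ i j ≤ π₁ i j := fun i j =>
      mul_le_of_le_one_right (hπ₁0 i j) (hβ1 j)
    have hπ₂le : ∀ i j, π₂ i j ≤ π i j := fun i j => le_trans (hπ₂le₁ i j) (hπ₁le i j)
    have hc₂ : ∀ j, ∑ i, π₂ i j = min (∑ i, π₁ i j) (q j) := by
      intro j
      have h : ∑ i, π₂ i j = β j * ∑ i, π₁ i j := by
        simp only [hπ₂]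
        rw [← Finset.sum_mul, mul_comm]
      rw [h, hβ, minmul_aux (hc₁0 j) (hq.1 j)]
    have hr₂le : ∀ i, ∑ j, π₂ i j ≤ p i := by
      intro i
      calc ∑ j, π₂ i j ≤ ∑ j, π₁ i j := Finset.sum_le_sum fun j _ => hπ₂le₁ i j
        _ = min (∑ j, π i j) (p i) := hr₁ i
        _ ≤ p i := min_le_right _ _
    set ep : Fin n → ℝ := fun i => p i - ∑ j, π₂ i j with hep
    set eq2 : Fin n → ℝ := fun j => q j - ∑ i, π₂ i j with heq2
    have hep0 : ∀ i, 0 ≤ ep i := fun i => sub_nonneg.2 (hr₂le i)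
    have heq0 : ∀ j, 0 ≤ eq2 j := fun j =>
      sub_nonneg.2 (by rw [hc₂ j]; exact min_le_right _ _)
    set m : ℝ := ∑ i, ep i with hm
    have hm0 : 0 ≤ m := Finset.sum_nonneg fun i _ => hep0 i
    have hmeq : ∑ j, eq2 j = m := by
      have h1 : ∑ j, eq2 j = 1 - ∑ j, ∑ i, π₂ i j := by
        simp [heq2, Finset.sum_sub_distrib, hq.2]
      have h2 : m = 1 - ∑ i, ∑ j, π₂ i j := by
        simp [hm, hep, Finset.sum_sub_distrib, hp.2]
      rw [h1, h2, Finset.sum_comm]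
    have hdivp : ∀ i, ep i * (m / m) = ep i := by
      intro i
      rcases eq_or_lt_of_le hm0 with h | h
      · have hz : ep i = 0 :=
          (Finset.sum_eq_zero_iff_of_nonneg (fun i _ => hep0 i)).1 h.symm i (mem_univ i)
        simp [hz]
      · rw [div_self h.ne', mul_one]
    have hdivq : ∀ j, eq2 j * (m / m) = eq2 j := by
      intro j
      rcases eq_or_lt_of_le hm0 with h | h
      · have hz : eq2 j = 0 :=
          (Finset.sum_eq_zero_iff_of_nonneg (fun j _ => heq0 j)).1 (hmeq.trans h.symm) j
            (mem_univ j)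
        simp [hz]
      · rw [div_self h.ne', mul_one]
    set π' : Matrix (Fin n) (Fin n) ℝ := fun i j => π₂ i j + ep i * eq2 j / m with hπ'
    have hπ'0 : ∀ i j, 0 ≤ π' i j := fun i j =>
      add_nonneg (hπ₂0 i j) (div_nonneg (mul_nonneg (hep0 i) (heq0 j)) hm0)
    have hrow' : ∀ i, ∑ j, π' i j = p i := by
      intro i
      have h : ∑ j, π' i j = (∑ j, π₂ i j) + ep i * ((∑ j, eq2 j) / m) := by
        simp [hπ', Finset.sum_add_distrib, Finset.mul_sum, Finset.sum_div, mul_div_assoc]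
      rw [h, hmeq, hdivp i, hep]
      ring
    have hcol' : ∀ j, ∑ i, π' i j = q j := by
      intro j
      have h : ∑ i, π' i j = (∑ i, π₂ i j) + eq2 j * ((∑ i, ep i) / m) := by
        have : ∀ i, ep i * eq2 j / m = eq2 j * (ep i / m) := by intro i; ring
        simp [hπ', Finset.sum_add_distrib, this, ← Finset.mul_sum, Finset.sum_div]
      rw [h, ← hm, hdivq j, heq2]
      ring
    have hWle : W ≤ ∑ i, ∑ j, C i j * π' i j := hW.2 ⟨π', hπ'0, hrow', hcol', rfl⟩
    -- cost estimate
    have hmm : m * (m / m) = m := by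
      rcases eq_or_lt_of_le hm0 with h | h
      · simp [← h]
      · rw [div_self h.ne', mul_one]
    have hcost : ∑ i, ∑ j, C i j * π' i j ≤ (∑ i, ∑ j, C i j * π i j) + dmax * m := by
      have h1 : ∑ i, ∑ j, C i j * π' i j
          = (∑ i, ∑ j, C i j * π₂ i j) + ∑ i, ∑ j, C i j * (ep i * eq2 j / m) := by
        simp [hπ', mul_add, Finset.sum_add_distrib]
      have h2 : (∑ i, ∑ j, C i j * π₂ i j) ≤ ∑ i, ∑ j, C i j * π i j :=
        Finset.sum_le_sum fun i _ => Finset.sum_le_sum fun j _ =>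
          mul_le_mul_of_nonneg_left (hπ₂le i j) (hC i j)
      have h3 : (∑ i, ∑ j, C i j * (ep i * eq2 j / m)) ≤ dmax * m := by
        have h4 : (∑ i, ∑ j, C i j * (ep i * eq2 j / m))
            ≤ ∑ i, ∑ j, dmax * (ep i * eq2 j / m) :=
          Finset.sum_le_sum fun i _ => Finset.sum_le_sum fun j _ =>
            mul_le_mul_of_nonneg_right (hCle i j)
              (div_nonneg (mul_nonneg (hep0 i) (heq0 j)) hm0)
        have h5 : (∑ i, ∑ j, dmax * (ep i * eq2 j / m))
            = dmax / m * ((∑ i, ep i) * (∑ j, eq2 j)) := by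
          rw [Finset.sum_mul_sum, Finset.mul_sum]
          refine Finset.sum_congr rfl fun i _ => ?_
          rw [Finset.mul_sum]
          refine Finset.sum_congr rfl fun j _ => ?_
          ring
        have h6 : dmax / m * ((∑ i, ep i) * (∑ j, eq2 j)) = dmax * (m * (m / m)) := by
          rw [hmeq, ← hm]
          ring
        calc (∑ i, ∑ j, C i j * (ep i * eq2 j / m)) ≤ _ := h4
          _ = dmax * (m * (m / m)) := h5.trans h6
          _ = dmax * m := by rw [hmm]
      linarith
    -- exact penalty lower bound on val π
    set e : ℝ := (∑ i, |(∑ j, π i j) - p i|) + (∑ j, |(∑ i, π i j) - q j|) with he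
    have he0 : 0 ≤ e :=
      add_nonneg (Finset.sum_nonneg fun _ _ => abs_nonneg _)
        (Finset.sum_nonneg fun _ _ => abs_nonneg _)
    have habs : ∀ x : ℝ, |x| = (if 0 ≤ x then (1:ℝ) else -1) * x := by
      intro x
      rcases le_or_gt 0 x with h | h
      · rw [if_pos h, one_mul, abs_of_nonneg h]
      · rw [if_neg (not_le.2 h), neg_one_mul, abs_of_neg h]
    have hval_ge : (∑ i, ∑ j, C i j * π i j) + 2 * dmax * e ≤ val π := by
      refine (hval π).2 ⟨fun i => if 0 ≤ (∑ j, π i j) - p i then 1 else -1,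
        fun j => if 0 ≤ (∑ i, π i j) - q j then 1 else -1, ?_, ?_, ?_⟩
      · intro i; dsimp only; split <;> norm_num
      · intro j; dsimp only; split <;> norm_num
      · have hs1 : ∑ i, |(∑ j, π i j) - p i|
            = ∑ i, (if 0 ≤ (∑ j, π i j) - p i then (1:ℝ) else -1) * ((∑ j, π i j) - p i) :=
          Finset.sum_congr rfl fun i _ => habs _
        have hs2 : ∑ j, |(∑ i, π i j) - q j|
            = ∑ j, (if 0 ≤ (∑ i, π i j) - q j then (1:ℝ) else -1) * ((∑ i, π i j) - q j) :=
          Finset.sum_congr rfl fun j _ => habs _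
        beta_reduce
        rw [he, hs1, hs2]
    -- m ≤ e
    have hA : ∀ j, eq2 j ≤ |(∑ i, π i j) - q j| + ((∑ i, π i j) - ∑ i, π₁ i j) := by
      intro j
      have h1 : eq2 j = q j - min (∑ i, π₁ i j) (q j) := by simp only [heq2]; rw [hc₂ j]
      have h2 := hc₁le j
      have h3 : q j - (∑ i, π i j) ≤ |(∑ i, π i j) - q j| := by
        rw [abs_sub_comm]; exact le_abs_self _
      rcases le_total (∑ i, π₁ i j) (q j) with h | h
      · rw [h1, min_eq_left h]; linarith
      · rw [h1, min_eq_right h]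
        have := abs_nonneg ((∑ i, π i j) - q j)
        linarith
    have hB : ∀ i, p i - min (∑ j, π i j) (p i) ≤ |(∑ j, π i j) - p i| := by
      intro i
      rcases le_total (∑ j, π i j) (p i) with h | h
      · rw [min_eq_left h, abs_sub_comm]; exact le_abs_self _
      · rw [min_eq_right h, sub_self]; exact abs_nonneg _
    have hsum_c₁ : ∑ j, ∑ i, π₁ i j = ∑ i, min (∑ j, π i j) (p i) := by
      rw [Finset.sum_comm]; exact Finset.sum_congr rfl fun i _ => hr₁ i
    have hccsum : ∑ j, ∑ i, π i j = 1 := by rw [Finset.sum_comm]; exact hπs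
    have hme : m ≤ e := by
      have h1 : m = ∑ j, eq2 j := hmeq.symm
      have h2 : ∑ j, eq2 j
          ≤ (∑ j, |(∑ i, π i j) - q j|) + ∑ j, ((∑ i, π i j) - ∑ i, π₁ i j) := by
        rw [← Finset.sum_add_distrib]
        exact Finset.sum_le_sum fun j _ => hA j
      have h3 : ∑ j, ((∑ i, π i j) - ∑ i, π₁ i j)
          = 1 - ∑ i, min (∑ j, π i j) (p i) := by
        rw [Finset.sum_sub_distrib, hccsum, hsum_c₁]
      have h4 : 1 - ∑ i, min (∑ j, π i j) (p i) ≤ ∑ i, |(∑ j, π i j) - p i| := by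
        have h5 : 1 - ∑ i, min (∑ j, π i j) (p i)
            = ∑ i, (p i - min (∑ j, π i j) (p i)) := by
          rw [Finset.sum_sub_distrib, hp.2]
        rw [h5]
        exact Finset.sum_le_sum fun i _ => hB i
      rw [he]; linarith
    -- conclude
    have : W ≤ val π := by
      have h7 : dmax * m ≤ 2 * dmax * e := by nlinarith
      linarith
    exact this
end

section
/- The bilinear function f(𝐱,𝐲) = 𝐲ᵀ𝐀𝐱, where 𝐀 = (Â, ℰ) is assembled from m copies of the OT incidence matrix A and a coupling matrix ℰ as in the Wasserstein barycenter saddle-point formulation, satisfies the cross-Lipschitz bound L_{xy} = max_{‖ỹ‖₂ ≤ 1} max_{‖𝐱‖_𝒳 ≤ 1} ⟨𝐀𝐱, ỹ⟩ ≤ √2, where ‖𝐱‖_𝒳 = sqrt(∑_{i=1}^m ‖xᵢ‖₁² + m‖p‖₁²) for 𝐱 = (x₁,…,x_m,p) with xᵢ ∈ Δ_{n²}, p ∈ Δₙ. -/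
/-- Cross-Lipschitz bound `L_{xy} ≤ √2` for the bilinear Wasserstein-barycenter
saddle-point objective `f(𝐱,𝐲) = 𝐲ᵀ𝐀𝐱`: for nonnegative blocks `xᵢ` (matrices `πᵢ`)
and `p` with `∑ᵢ‖xᵢ‖₁² + m‖p‖₁² ≤ 1`, and any `ỹ = (uᵢ, vᵢ)ᵢ` with `‖ỹ‖₂ ≤ 1`,
one has `⟨𝐀𝐱, ỹ⟩ ≤ √2`, where the `i`-th block of `𝐀𝐱` is `Axᵢ − (pᵀ, 0ᵀ)ᵀ`. -/
theorem stmt13 {n m : ℕ}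
    (π : Fin m → Matrix (Fin n) (Fin n) ℝ) (p : Fin n → ℝ)
    (hπ : ∀ i a b, 0 ≤ π i a b) (hp : ∀ a, 0 ≤ p a)
    (hxnorm : (∑ i, (∑ a, ∑ b, π i a b) ^ 2) + m * (∑ a, p a) ^ 2 ≤ 1)
    (u v : Fin m → Fin n → ℝ)
    (hynorm : (∑ i, ((∑ a, (u i a) ^ 2) + (∑ b, (v i b) ^ 2))) ≤ 1) :
    (∑ i, ((∑ a, u i a * ((∑ b, π i a b) - p a)) + (∑ b, v i b * (∑ a, π i a b))))
      ≤ Real.sqrt 2 := by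
  set L := (∑ i, ((∑ a, u i a * ((∑ b, π i a b) - p a)) + (∑ b, v i b * (∑ a, π i a b))))
    with hL
  have hsqrt2 : (0:ℝ) ≤ Real.sqrt 2 := Real.sqrt_nonneg 2
  rcases le_or_gt L 0 with h0 | h0
  · linarith
  -- Cauchy–Schwarz over the combined index type
  set f : ((Fin m × Fin n) ⊕ (Fin m × Fin n)) → ℝ := Sum.elim (fun q => u q.1 q.2) (fun q => v q.1 q.2) with hf
  set g : ((Fin m × Fin n) ⊕ (Fin m × Fin n)) → ℝ := Sum.elim (fun q => (∑ b, π q.1 q.2 b) - p q.2)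
    (fun q => ∑ a, π q.1 a q.2) with hg
  have cs := Finset.sum_mul_sq_le_sq_mul_sq Finset.univ f g
  have hLsum : L = ∑ x : ((Fin m × Fin n) ⊕ (Fin m × Fin n)), f x * g x := by
    simp [hL, hf, hg, Fintype.sum_sum_type, Fintype.sum_prod_type, Finset.sum_add_distrib]
  have hf2 : ∑ x : ((Fin m × Fin n) ⊕ (Fin m × Fin n)), f x ^ 2 ≤ 1 := by
    calc ∑ x : ((Fin m × Fin n) ⊕ (Fin m × Fin n)), f x ^ 2
        = (∑ i, ((∑ a, (u i a) ^ 2) + (∑ b, (v i b) ^ 2))) := by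
          simp [hf, Fintype.sum_sum_type, Fintype.sum_prod_type, Finset.sum_add_distrib]
      _ ≤ 1 := hynorm
  have hg2 : ∑ x : ((Fin m × Fin n) ⊕ (Fin m × Fin n)), g x ^ 2 ≤ 2 := by
    have hblock : ∀ i : Fin m,
        (∑ a, ((∑ b, π i a b) - p a) ^ 2) + (∑ b, (∑ a, π i a b) ^ 2)
          ≤ 2 * (∑ a, ∑ b, π i a b) ^ 2 + (∑ a, p a) ^ 2 := by
      intro i
      have h1 : ∑ a, ((∑ b, π i a b) - p a) ^ 2
          ≤ (∑ a, (∑ b, π i a b) ^ 2) + ∑ a, (p a) ^ 2 := by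
        have hcross : 0 ≤ ∑ a, (∑ b, π i a b) * p a :=
          Finset.sum_nonneg fun a _ => mul_nonneg
            (Finset.sum_nonneg fun b _ => hπ i a b) (hp a)
        have : ∑ a, ((∑ b, π i a b) - p a) ^ 2
            = (∑ a, (∑ b, π i a b) ^ 2) + (∑ a, (p a) ^ 2)
              - 2 * ∑ a, (∑ b, π i a b) * p a := by
          rw [Finset.mul_sum, ← Finset.sum_add_distrib, ← Finset.sum_sub_distrib]
          exact Finset.sum_congr rfl fun a _ => by ring
        linarith
      have h2 : ∑ a, (∑ b, π i a b) ^ 2 ≤ (∑ a, ∑ b, π i a b) ^ 2 :=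
        Finset.sum_sq_le_sq_sum_of_nonneg fun a _ =>
          Finset.sum_nonneg fun b _ => hπ i a b
      have h3 : ∑ a, (p a) ^ 2 ≤ (∑ a, p a) ^ 2 :=
        Finset.sum_sq_le_sq_sum_of_nonneg fun a _ => hp a
      have h4 : ∑ b, (∑ a, π i a b) ^ 2 ≤ (∑ a, ∑ b, π i a b) ^ 2 := by
        have := Finset.sum_sq_le_sq_sum_of_nonneg
          (s := Finset.univ) (f := fun b => ∑ a, π i a b)
          (fun b _ => Finset.sum_nonneg fun a _ => hπ i a b)
        rwa [Finset.sum_comm] at this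
      linarith
    have hmp : (0:ℝ) ≤ m * (∑ a, p a) ^ 2 :=
      mul_nonneg (Nat.cast_nonneg m) (sq_nonneg _)
    calc ∑ x : ((Fin m × Fin n) ⊕ (Fin m × Fin n)), g x ^ 2
        = ∑ i, ((∑ a, ((∑ b, π i a b) - p a) ^ 2) + (∑ b, (∑ a, π i a b) ^ 2)) := by
          simp [hg, Fintype.sum_sum_type, Fintype.sum_prod_type, Finset.sum_add_distrib]
      _ ≤ ∑ i, (2 * (∑ a, ∑ b, π i a b) ^ 2 + (∑ a, p a) ^ 2) :=
          Finset.sum_le_sum fun i _ => hblock i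
      _ = 2 * (∑ i, (∑ a, ∑ b, π i a b) ^ 2) + m * (∑ a, p a) ^ 2 := by
          rw [Finset.sum_add_distrib, ← Finset.mul_sum]
          simp [Finset.sum_const]
      _ ≤ 2 := by linarith
  have hL2 : L ^ 2 ≤ 2 := by
    rw [hLsum]
    calc (∑ x : ((Fin m × Fin n) ⊕ (Fin m × Fin n)), f x * g x) ^ 2 ≤ (∑ x : ((Fin m × Fin n) ⊕ (Fin m × Fin n)), f x ^ 2) * ∑ x : ((Fin m × Fin n) ⊕ (Fin m × Fin n)), g x ^ 2 := cs
      _ ≤ 1 * 2 := by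
          apply mul_le_mul hf2 hg2 (Finset.sum_nonneg fun x _ => sq_nonneg _) (by norm_num)
      _ = 2 := by norm_num
  have := Real.sqrt_le_sqrt hL2
  rwa [Real.sqrt_sq h0.le] at this
end

section
/- Let F be γ_F-strongly convex and L_F-Lipschitz smooth on ℝⁿ, A a matrix, and Ψ(y) = max_x (⟨y, Ax − b⟩ − F(x)) the dual objective with minimizer y* restricted to y⁰ + (Ker Aᵀ)^⊥. Then Ψ is L_Ψ-Lipschitz smooth with L_Ψ = λ_max(AᵀA)/γ_F and γ_Ψ-strongly convex on y⁰ + (Ker Aᵀ)^⊥ with γ_Ψ = λ⁺_min(AᵀA)/L_F, and in particular (γ_Ψ/2)‖y⁰ − y*‖₂² ≤ Ψ(y⁰) − Ψ(y*) ≤ (1/(2γ_Ψ))‖∇Ψ(y⁰)‖₂². -/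
open RealInnerProductSpace
open Filter Matrix

section aux
variable {E : Type*} [NormedAddCommGroup E] [InnerProductSpace ℝ E] [CompleteSpace E]

lemma aux_slope_tendsto (f : E → ℝ) (g x d : E) (hf : HasGradientAt f g x) :
    Tendsto (fun t : ℝ => (f (x + t • d) - f x) / t) (nhdsWithin 0 (Set.Ioi 0)) (nhds ⟪g, d⟫) := by
  have hc : HasDerivAt (fun t : ℝ => x + t • d) d 0 := by
    simpa using ((hasDerivAt_id (0:ℝ)).smul_const d).const_add x
  have hφ : HasDerivAt (fun t : ℝ => f (x + t • d)) ⟪g, d⟫ 0 := by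
    have hf' : HasFDerivAt f ((InnerProductSpace.toDual ℝ E) g) (x + (0:ℝ) • d) := by
      simpa using hf.hasFDerivAt
    have := (hf'.comp_hasDerivAt 0 hc)
    simpa [InnerProductSpace.toDual_apply_apply, Function.comp_def] using this
  have h1 := hasDerivAt_iff_tendsto_slope.mp hφ
  have h2 : Tendsto (slope (fun t : ℝ => f (x + t • d)) 0) (nhdsWithin 0 (Set.Ioi 0)) (nhds ⟪g, d⟫) :=
    h1.mono_left (nhdsWithin_mono _ (fun t ht => ne_of_gt ht))
  refine h2.congr' ?_
  filter_upwards [self_mem_nhdsWithin] with t ht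
  simp [slope, (show (0:ℝ) < t from ht).ne', div_eq_inv_mul]

lemma aux_dir_le (f : E → ℝ) (g x d : E) (hf : HasGradientAt f g x) (C K : ℝ)
    (h : ∀ t : ℝ, t ∈ Set.Ioo (0:ℝ) 1 → f (x + t • d) - f x ≤ t * (C + t * K)) :
    ⟪g, d⟫ ≤ C := by
  have h1 := aux_slope_tendsto f g x d hf
  have h2 : Tendsto (fun t : ℝ => C + t * K) (nhdsWithin 0 (Set.Ioi 0)) (nhds C) := by
    have : Tendsto (fun t : ℝ => C + t * K) (nhds 0) (nhds (C + 0 * K)) := by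
      exact (tendsto_id.mul_const K).const_add C
    simpa using this.mono_left nhdsWithin_le_nhds
  refine le_of_tendsto_of_tendsto h1 h2 ?_
  filter_upwards [Ioo_mem_nhdsGT_of_mem (by norm_num : (0:ℝ) ∈ Set.Ico (0:ℝ) 1)] with t ht
  rw [div_le_iff₀ ht.1]
  nlinarith [h t ht]

lemma aux_dir_ge (f : E → ℝ) (g x d : E) (hf : HasGradientAt f g x) (C : ℝ)
    (h : ∀ t : ℝ, t ∈ Set.Ioo (0:ℝ) 1 → t * C ≤ f (x + t • d) - f x) :
    C ≤ ⟪g, d⟫ := by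
  have h1 := aux_slope_tendsto f g x d hf
  refine ge_of_tendsto h1 ?_
  filter_upwards [Ioo_mem_nhdsGT_of_mem (by norm_num : (0:ℝ) ∈ Set.Ico (0:ℝ) 1)] with t ht
  rw [le_div_iff₀ ht.1]
  linarith [h t ht]

lemma aux_subgrad_eq (f : E → ℝ) (g x s : E) (hf : HasGradientAt f g x)
    (h : ∀ z, f x + ⟪s, z - x⟫ ≤ f z) : g = s := by
  have key : ∀ d : E, ⟪s, d⟫ ≤ ⟪g, d⟫ := by
    intro d
    refine aux_dir_ge f g x d hf _ (fun t ht => ?_)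
    have := h (x + t • d)
    have h2 : ⟪s, (x + t • d) - x⟫ = t * ⟪s, d⟫ := by
      simp [real_inner_smul_right]
    linarith [this, h2 ▸ this]
  have key2 : ∀ d : E, ⟪g - s, d⟫ = 0 := by
    intro d
    have h1 := key d
    have h2 := key (-d)
    rw [inner_neg_right, inner_neg_right, neg_le_neg_iff] at h2
    rw [inner_sub_left]
    linarith
  have := key2 (g - s)
  rw [inner_self_eq_zero] at this
  exact sub_eq_zero.mp this

lemma aux_inner_gradient (c x : E) : HasGradientAt (fun y => ⟪c, y⟫) c x := by
  have heq : (fun y : E => ⟪c, y⟫) = ⇑(InnerProductSpace.toDual ℝ E c) := by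
    ext y; simp [InnerProductSpace.toDual_apply_apply]
  rw [hasGradientAt_iff_hasFDerivAt, heq]
  exact ContinuousLinearMap.hasFDerivAt _

lemma aux_normsq_gradient (γ : ℝ) (x : E) :
    HasGradientAt (fun y : E => γ / 2 * ‖y‖ ^ 2) (γ • x) x := by
  rw [hasGradientAt_iff_hasFDerivAt]
  have h1 := ((hasFDerivAt_id x).inner ℝ (hasFDerivAt_id x)).const_mul (γ / 2)
  have heq : (fun y : E => γ / 2 * ‖y‖ ^ 2) = fun y : E => γ / 2 * ⟪y, y⟫ := by
    ext y; rw [real_inner_self_eq_norm_sq]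
  rw [heq]
  refine h1.congr_fderiv ?_
  ext v
  simp [InnerProductSpace.toDual_apply_apply, real_inner_smul_left, fderivInnerCLM_apply,
    real_inner_comm x v]
  ring

lemma aux_convex_inner (f : E → ℝ) (gx x y : E) (hcvx : ConvexOn ℝ Set.univ f)
    (hf : HasGradientAt f gx x) : ⟪gx, y - x⟫ ≤ f y - f x := by
  refine aux_dir_le f gx x (y - x) hf (f y - f x) 0 (fun t ht => ?_)
  have h := hcvx.2 (Set.mem_univ x) (Set.mem_univ y) (by linarith [ht.2] : (0:ℝ) ≤ 1 - t)
    (le_of_lt ht.1) (by ring)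
  have hx : (1 - t) • x + t • y = x + t • (y - x) := by
    module
  rw [hx] at h
  simp only [smul_eq_mul] at h
  nlinarith [h]

lemma aux_strong_mono (f : E → ℝ) (g : E → E) (γ : ℝ)
    (hsc : StrongConvexOn Set.univ γ f) (hg : ∀ z, HasGradientAt f (g z) z) (x y : E) :
    γ * ‖x - y‖ ^ 2 ≤ ⟪g x - g y, x - y⟫ := by
  set h : E → ℝ := fun z => f z - γ / 2 * ‖z‖ ^ 2 with hh
  have hcvx : ConvexOn ℝ Set.univ h := strongConvexOn_iff_convex.mp hsc
  have hgh : ∀ z, HasGradientAt h (g z - γ • z) z := by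
    intro z
    have := (hg z).hasFDerivAt.sub (aux_normsq_gradient γ z).hasFDerivAt
    rw [hasGradientAt_iff_hasFDerivAt, map_sub]
    exact this
  have h1 := aux_convex_inner h (g x - γ • x) x y hcvx (hgh x)
  have h2 := aux_convex_inner h (g y - γ • y) y x hcvx (hgh y)
  have e1 : ⟪g x - γ • x, y - x⟫ = ⟪g x, y - x⟫ - γ * ⟪x, y - x⟫ := by
    rw [inner_sub_left, real_inner_smul_left]
  have e2 : ⟪g y - γ • y, x - y⟫ = ⟪g y, x - y⟫ - γ * ⟪y, x - y⟫ := by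
    rw [inner_sub_left, real_inner_smul_left]
  have e3 : ⟪g x, y - x⟫ = -⟪g x, x - y⟫ := by
    rw [← inner_neg_right]; congr 1; abel
  have e4 : ⟪x, y - x⟫ = -⟪x, x - y⟫ := by
    rw [← inner_neg_right]; congr 1; abel
  have e5 : ⟪g x - g y, x - y⟫ = ⟪g x, x - y⟫ - ⟪g y, x - y⟫ := inner_sub_left _ _ _
  have e6 : ⟪x - y, x - y⟫ = ⟪x, x - y⟫ - ⟪y, x - y⟫ := inner_sub_left _ _ _
  have e7 : ⟪x - y, x - y⟫ = ‖x - y‖ ^ 2 := real_inner_self_eq_norm_sq _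
  rw [e1, e3, e4] at h1
  rw [e2] at h2
  have e8 : γ * ‖x - y‖ ^ 2 = γ * ⟪x, x - y⟫ - γ * ⟪y, x - y⟫ := by
    rw [← e7, e6]; ring
  linarith

lemma aux_descent (f : E → ℝ) (g : E → E) (L : ℝ) (hL : 0 ≤ L)
    (hg : ∀ z, HasGradientAt f (g z) z) (hlip : ∀ z w, ‖g z - g w‖ ≤ L * ‖z - w‖)
    (x h : E) : f (x + h) ≤ f x + ⟪g x, h⟫ + L / 2 * ‖h‖ ^ 2 := by
  have hgcont : Continuous g := by
    rw [Metric.continuous_iff]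
    intro z ε hε
    by_cases hL0 : L = 0
    · exact ⟨1, one_pos, fun w _ => by
        have := hlip w z
        rw [hL0, zero_mul] at this
        have : g w = g z := by
          have := norm_sub_eq_zero_iff.mp (le_antisymm this (norm_nonneg _))
          exact this
        simpa [dist_eq_norm, this] using hε⟩
    · have hLpos : 0 < L := lt_of_le_of_ne hL (Ne.symm hL0)
      refine ⟨ε / L, by positivity, fun w hw => ?_⟩
      rw [dist_eq_norm] at hw ⊢
      calc ‖g w - g z‖ ≤ L * ‖w - z‖ := hlip w z
        _ < L * (ε / L) := by exact mul_lt_mul_of_pos_left hw hLpos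
        _ = ε := by field_simp
  set c : ℝ → E := fun t => x + t • h with hc
  have hcd : ∀ t : ℝ, HasDerivAt c h t := fun t => by
    simpa [hc] using ((hasDerivAt_id t).smul_const h).const_add x
  have hφ : ∀ t : ℝ, HasDerivAt (fun s => f (c s)) ⟪g (c t), h⟫ t := by
    intro t
    have := (hg (c t)).hasFDerivAt.comp_hasDerivAt t (hcd t)
    simpa [InnerProductSpace.toDual_apply_apply, Function.comp_def] using this
  have hcont : Continuous fun t : ℝ => ⟪g (c t), h⟫ := by
    exact (Continuous.inner (hgcont.comp (by continuity)) continuous_const)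
  have hint : IntervalIntegrable (fun t : ℝ => ⟪g (c t), h⟫) MeasureTheory.volume 0 1 :=
    hcont.intervalIntegrable 0 1
  have heq : f (x + h) - f x = ∫ t in (0:ℝ)..1, ⟪g (c t), h⟫ := by
    have := intervalIntegral.integral_eq_sub_of_hasDerivAt
      (f := fun s => f (c s)) (fun t _ => hφ t) hint
    rw [this]
    simp [hc]
  have hbound : ∀ t ∈ Set.Icc (0:ℝ) 1, ⟪g (c t), h⟫ ≤ ⟪g x, h⟫ + t * (L * ‖h‖ ^ 2) := by
    intro t ht
    have h1 : ⟪g (c t), h⟫ - ⟪g x, h⟫ = ⟪g (c t) - g x, h⟫ := by rw [inner_sub_left]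
    have h2 : ⟪g (c t) - g x, h⟫ ≤ ‖g (c t) - g x‖ * ‖h‖ := real_inner_le_norm _ _
    have h3 : ‖g (c t) - g x‖ ≤ L * (t * ‖h‖) := by
      have := hlip (c t) x
      simpa [hc, norm_smul, abs_of_nonneg ht.1] using this
    nlinarith [norm_nonneg h, mul_nonneg ht.1 (norm_nonneg h)]
  have hmono : (∫ t in (0:ℝ)..1, ⟪g (c t), h⟫)
      ≤ ∫ t in (0:ℝ)..1, (⟪g x, h⟫ + t * (L * ‖h‖ ^ 2)) := by
    refine intervalIntegral.integral_mono_on zero_le_one hint ?_ hbound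
    exact (Continuous.intervalIntegrable (by continuity) 0 1)
  have hval : (∫ t in (0:ℝ)..1, (⟪g x, h⟫ + t * (L * ‖h‖ ^ 2)))
      = ⟪g x, h⟫ + L / 2 * ‖h‖ ^ 2 := by
    rw [intervalIntegral.integral_add (intervalIntegrable_const)
      ((intervalIntegral.intervalIntegrable_id).mul_const _)]
    simp [intervalIntegral.integral_mul_const, integral_id]
    ring
  linarith [heq ▸ hmono, hval ▸ hmono]

section mat
variable {n p : ℕ}

lemma aux_adj (A : Matrix (Fin p) (Fin n) ℝ) (x : EuclideanSpace ℝ (Fin n))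
    (y : EuclideanSpace ℝ (Fin p)) :
    ⟪Matrix.toEuclideanLin A x, y⟫ = ⟪x, Matrix.toEuclideanLin Aᵀ y⟫ := by
  simp only [Matrix.toEuclideanLin_apply, PiLp.inner_apply, RCLike.inner_apply,
    conj_trivial]
  show dotProduct y.ofLp (A *ᵥ x.ofLp) = dotProduct (Aᵀ *ᵥ y.ofLp) x.ofLp
  rw [dotProduct_mulVec, Matrix.mulVec_transpose]

lemma aux_toEuc_comp (A : Matrix (Fin p) (Fin n) ℝ) (v : EuclideanSpace ℝ (Fin n)) :
    Matrix.toEuclideanLin (Aᵀ * A) v = Matrix.toEuclideanLin Aᵀ (Matrix.toEuclideanLin A v) := by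
  rw [Matrix.toEuclideanLin_apply, Matrix.toEuclideanLin_apply, Matrix.toEuclideanLin_apply]
  simp only [Equiv.apply_symm_apply]
  rw [Matrix.mulVec_mulVec]

lemma aux_spec (A : Matrix (Fin p) (Fin n) ℝ) (hH : (Aᵀ * A).IsHermitian)
    (v : EuclideanSpace ℝ (Fin n)) (i : Fin n) :
    hH.eigenvectorBasis.repr (Matrix.toEuclideanLin (Aᵀ * A) v) i
      = hH.eigenvalues i * hH.eigenvectorBasis.repr v i := by
  set B := hH.eigenvectorBasis with hB
  rw [OrthonormalBasis.repr_apply_apply, OrthonormalBasis.repr_apply_apply]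
  have ht : (Aᵀ * A)ᵀ = Aᵀ * A := by rw [Matrix.transpose_mul, Matrix.transpose_transpose]
  have hsym : ⟪B i, Matrix.toEuclideanLin (Aᵀ * A) v⟫
      = ⟪Matrix.toEuclideanLin (Aᵀ * A) (B i), v⟫ := by
    rw [aux_adj, ht]
  rw [hsym]
  have hBi : Matrix.toEuclideanLin (Aᵀ * A) (B i) = hH.eigenvalues i • B i := by
    rw [Matrix.toEuclideanLin_apply]
    have := hH.mulVec_eigenvectorBasis i
    rw [hB]
    ext j
    simp only [WithLp.ofLp_toLp]
    rw [this]
    simp [PiLp.smul_apply]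
  rw [hBi, real_inner_smul_left]

lemma aux_inner_repr (v w : EuclideanSpace ℝ (Fin p)) (B : OrthonormalBasis (Fin p) ℝ (EuclideanSpace ℝ (Fin p))) :
    ⟪v, w⟫ = ∑ i, B.repr v i * B.repr w i := by
  rw [← B.repr.inner_map_map v w]
  simp only [PiLp.inner_apply, RCLike.inner_apply, conj_trivial]
  exact Finset.sum_congr rfl (fun _ _ => mul_comm _ _)

lemma aux_quad1 (A : Matrix (Fin p) (Fin n) ℝ) (hH : (Aᵀ * A).IsHermitian)
    (v : EuclideanSpace ℝ (Fin n)) :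
    ‖Matrix.toEuclideanLin A v‖ ^ 2 = ∑ i, hH.eigenvalues i * (hH.eigenvectorBasis.repr v i) ^ 2 := by
  rw [← real_inner_self_eq_norm_sq, aux_adj, ← aux_toEuc_comp,
    aux_inner_repr v _ hH.eigenvectorBasis]
  refine Finset.sum_congr rfl (fun i _ => ?_)
  rw [aux_spec]
  ring

lemma aux_quad2 (v : EuclideanSpace ℝ (Fin n)) (B : OrthonormalBasis (Fin n) ℝ (EuclideanSpace ℝ (Fin n))) :
    ‖v‖ ^ 2 = ∑ i, (B.repr v i) ^ 2 := by
  rw [← real_inner_self_eq_norm_sq, aux_inner_repr v v B]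
  exact Finset.sum_congr rfl (fun i _ => (sq _).symm)

lemma aux_quad3 (A : Matrix (Fin p) (Fin n) ℝ) (hH : (Aᵀ * A).IsHermitian)
    (v : EuclideanSpace ℝ (Fin n)) :
    ‖Matrix.toEuclideanLin (Aᵀ * A) v‖ ^ 2
      = ∑ i, (hH.eigenvalues i) ^ 2 * (hH.eigenvectorBasis.repr v i) ^ 2 := by
  rw [aux_quad2 _ hH.eigenvectorBasis]
  refine Finset.sum_congr rfl (fun i _ => ?_)
  rw [aux_spec]
  ring

lemma aux_eig_nonneg (A : Matrix (Fin p) (Fin n) ℝ) (hH : (Aᵀ * A).IsHermitian) (i : Fin n) :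
    0 ≤ hH.eigenvalues i := by
  have h := aux_quad1 A hH (hH.eigenvectorBasis i)
  have hrepr : ∀ j, hH.eigenvectorBasis.repr (hH.eigenvectorBasis i) j
      = if j = i then 1 else 0 := by
    intro j
    rw [hH.eigenvectorBasis.repr_self i]
    exact EuclideanSpace.single_apply i 1 j
  have hsum : ∑ j, hH.eigenvalues j * (hH.eigenvectorBasis.repr (hH.eigenvectorBasis i) j) ^ 2
      = hH.eigenvalues i := by
    rw [Finset.sum_eq_single i]
    · rw [hrepr i]; simp
    · intro j _ hj; rw [hrepr j, if_neg hj]; ring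
    · intro hi; exact absurd (Finset.mem_univ i) hi
  rw [hsum] at h
  rw [← h]
  positivity

lemma aux_range (A : Matrix (Fin p) (Fin n) ℝ) (u : EuclideanSpace ℝ (Fin p))
    (hu : ∀ v : EuclideanSpace ℝ (Fin p), Matrix.toEuclideanLin Aᵀ v = 0 → ⟪u, v⟫ = 0) :
    ∃ w, Matrix.toEuclideanLin A w = u := by
  set R : Submodule ℝ (EuclideanSpace ℝ (Fin p)) := LinearMap.range (Matrix.toEuclideanLin A)
  have hmem : u ∈ Rᗮᗮ := by
    intro v hv
    have hAv : Matrix.toEuclideanLin Aᵀ v = 0 := by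
      have h0 : ⟪Matrix.toEuclideanLin Aᵀ v, Matrix.toEuclideanLin Aᵀ v⟫ = (0:ℝ) := by
        rw [← aux_adj]
        exact hv _ (LinearMap.mem_range_self _ _)
      exact inner_self_eq_zero.mp h0
    rw [real_inner_comm]
    exact hu v hAv
  rw [Submodule.orthogonal_orthogonal] at hmem
  exact hmem

lemma aux_opnorm (A : Matrix (Fin p) (Fin n) ℝ) (hH : (Aᵀ * A).IsHermitian) (lmax : ℝ)
    (hlmax : IsGreatest (Set.range hH.eigenvalues) lmax) :
    (∀ v : EuclideanSpace ℝ (Fin n), ‖Matrix.toEuclideanLin A v‖ ≤ Real.sqrt lmax * ‖v‖)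
    ∧ ∀ z : EuclideanSpace ℝ (Fin p), ‖Matrix.toEuclideanLin Aᵀ z‖ ≤ Real.sqrt lmax * ‖z‖ := by
  have hlnn : 0 ≤ lmax := by
    obtain ⟨j, hj⟩ := hlmax.1
    rw [← hj]; exact aux_eig_nonneg A hH j
  have hA : ∀ v : EuclideanSpace ℝ (Fin n), ‖Matrix.toEuclideanLin A v‖ ≤ Real.sqrt lmax * ‖v‖ := by
    intro v
    have h1 : ‖Matrix.toEuclideanLin A v‖ ^ 2 ≤ lmax * ‖v‖ ^ 2 := by
      rw [aux_quad1 A hH v, aux_quad2 v hH.eigenvectorBasis, Finset.mul_sum]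
      refine Finset.sum_le_sum (fun i _ => ?_)
      have := hlmax.2 (Set.mem_range_self i)
      nlinarith [sq_nonneg (hH.eigenvectorBasis.repr v i)]
    calc ‖Matrix.toEuclideanLin A v‖ = Real.sqrt (‖Matrix.toEuclideanLin A v‖ ^ 2) :=
          (Real.sqrt_sq (norm_nonneg _)).symm
      _ ≤ Real.sqrt (lmax * ‖v‖ ^ 2) := Real.sqrt_le_sqrt h1
      _ = Real.sqrt lmax * ‖v‖ := by
          rw [Real.sqrt_mul hlnn, Real.sqrt_sq (norm_nonneg _)]
  refine ⟨hA, fun z => ?_⟩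
  set w := Matrix.toEuclideanLin Aᵀ z with hw
  have h1 : ‖w‖ ^ 2 = ⟪Matrix.toEuclideanLin A w, z⟫ := by
    rw [aux_adj, ← hw, real_inner_self_eq_norm_sq]
  have h2 : ‖w‖ ^ 2 ≤ Real.sqrt lmax * ‖w‖ * ‖z‖ := by
    rw [h1]
    calc ⟪Matrix.toEuclideanLin A w, z⟫ ≤ ‖Matrix.toEuclideanLin A w‖ * ‖z‖ :=
          real_inner_le_norm _ _
      _ ≤ Real.sqrt lmax * ‖w‖ * ‖z‖ := by
          have := hA w
          have hz := norm_nonneg z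
          nlinarith
  rcases eq_or_lt_of_le (norm_nonneg w) with h0 | h0
  · rw [← h0]
    positivity
  · nlinarith

lemma aux_lower (A : Matrix (Fin p) (Fin n) ℝ) (hH : (Aᵀ * A).IsHermitian) (lminpos : ℝ)
    (hlmin : IsLeast {r | r ∈ Set.range hH.eigenvalues ∧ r ≠ 0} lminpos)
    (w : EuclideanSpace ℝ (Fin n)) :
    lminpos * ‖Matrix.toEuclideanLin A w‖ ^ 2
      ≤ ‖Matrix.toEuclideanLin Aᵀ (Matrix.toEuclideanLin A w)‖ ^ 2 := by
  rw [← aux_toEuc_comp, aux_quad1 A hH w, aux_quad3 A hH w, Finset.mul_sum]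
  refine Finset.sum_le_sum (fun i _ => ?_)
  rcases eq_or_ne (hH.eigenvalues i) 0 with h0 | h0
  · rw [h0]; simp
  · have h1 : lminpos ≤ hH.eigenvalues i := hlmin.2 ⟨Set.mem_range_self i, h0⟩
    have h2 : 0 ≤ hH.eigenvalues i := aux_eig_nonneg A hH i
    nlinarith [mul_nonneg (mul_nonneg h2 (sq_nonneg (hH.eigenvectorBasis.repr w i)))
      (sub_nonneg.mpr h1)]
end mat


set_option maxHeartbeats 2000000 in
/-- Dual smoothness/strong convexity: for `F` `γ_F`-strongly convex and `L_F`-Lipschitz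
smooth and `Ψ(y) = max_x (⟨y, Ax − b⟩ − F(x))`, `Ψ` is `λ_max(AᵀA)/γ_F`-Lipschitz smooth,
`λ⁺_min(AᵀA)/L_F`-strongly convex on `y⁰ + (Ker Aᵀ)^⊥`, and
`(γ_Ψ/2)‖y⁰ − y*‖² ≤ Ψ(y⁰) − Ψ(y*) ≤ (1/(2γ_Ψ))‖∇Ψ(y⁰)‖²`. -/
theorem stmt18 {n p : ℕ}
    (F : EuclideanSpace ℝ (Fin n) → ℝ)
    (γF LF : ℝ) (hγF : 0 < γF) (hLF : 0 < LF)
    (hsc : StrongConvexOn Set.univ γF F)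
    (gF : EuclideanSpace ℝ (Fin n) → EuclideanSpace ℝ (Fin n))
    (hgF : ∀ x, HasGradientAt F (gF x) x)
    (hFsmooth : ∀ x y, ‖gF x - gF y‖ ≤ LF * ‖x - y‖)
    (A : Matrix (Fin p) (Fin n) ℝ) (b : EuclideanSpace ℝ (Fin p))
    (hH : (A.transpose * A).IsHermitian)
    (lmax lminpos : ℝ)
    (hlmax : IsGreatest (Set.range hH.eigenvalues) lmax)
    (hlmin : IsLeast {r | r ∈ Set.range hH.eigenvalues ∧ r ≠ 0} lminpos)
    (Ψ : EuclideanSpace ℝ (Fin p) → ℝ)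
    (hΨ : ∀ y, IsGreatest {r | ∃ x : EuclideanSpace ℝ (Fin n),
      r = ⟪y, (WithLp.equiv 2 (Fin p → ℝ)).symm (A.mulVec x) - b⟫ - F x} (Ψ y))
    (gΨ : EuclideanSpace ℝ (Fin p) → EuclideanSpace ℝ (Fin p))
    (hgΨ : ∀ y, HasGradientAt Ψ (gΨ y) y)
    (y0 : EuclideanSpace ℝ (Fin p))
    (S : Set (EuclideanSpace ℝ (Fin p)))
    (hS : S = {y | ∀ v : EuclideanSpace ℝ (Fin p),
      A.transpose.mulVec v = 0 → ⟪y - y0, v⟫ = 0})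
    (ystar : EuclideanSpace ℝ (Fin p)) (hystar : ystar ∈ S)
    (hymin : ∀ y ∈ S, Ψ ystar ≤ Ψ y) :
    (∀ u v, ‖gΨ u - gΨ v‖ ≤ lmax / γF * ‖u - v‖)
    ∧ StrongConvexOn S (lminpos / LF) Ψ
    ∧ (lminpos / LF) / 2 * ‖y0 - ystar‖ ^ 2 ≤ Ψ y0 - Ψ ystar
    ∧ Ψ y0 - Ψ ystar ≤ 1 / (2 * (lminpos / LF)) * ‖gΨ y0‖ ^ 2 := by
  classical
  set An : EuclideanSpace ℝ (Fin n) →ₗ[ℝ] EuclideanSpace ℝ (Fin p) :=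
    Matrix.toEuclideanLin A with hAn
  set At : EuclideanSpace ℝ (Fin p) →ₗ[ℝ] EuclideanSpace ℝ (Fin n) :=
    Matrix.toEuclideanLin Aᵀ with hAt
  -- basic positivity facts
  have hlppos : 0 < lminpos := by
    obtain ⟨⟨j, hj⟩, hne⟩ := hlmin.1
    rcases lt_or_eq_of_le (hj ▸ aux_eig_nonneg A hH j) with h | h
    · exact h
    · exact absurd h.symm hne
  have hlmle : lminpos ≤ lmax := hlmax.2 hlmin.1.1
  have hlmaxpos : 0 < lmax := lt_of_lt_of_le hlppos hlmle
  set γψ : ℝ := lminpos / LF with hγψ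
  have hγψpos : 0 < γψ := div_pos hlppos hLF
  obtain ⟨hAbd, hAtbd⟩ := aux_opnorm A hH lmax hlmax
  have hsq : Real.sqrt lmax ^ 2 = lmax := Real.sq_sqrt hlmaxpos.le
  -- maximizers
  have hmax : ∀ y, ∃ x, Ψ y = ⟪y, An x - b⟫ - F x := fun y => (hΨ y).1
  choose xs hxs using hmax
  have hub : ∀ y x, ⟪y, An x - b⟫ - F x ≤ Ψ y := fun y x => (hΨ y).2 ⟨x, rfl⟩
  -- adjoint identity in convenient form
  have hadj : ∀ (w : EuclideanSpace ℝ (Fin n)) (y : EuclideanSpace ℝ (Fin p)),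
      ⟪y, An w⟫ = ⟪At y, w⟫ := fun w y => by
    rw [real_inner_comm, aux_adj, real_inner_comm]
  -- first order condition for maximizers : gF (xs y) = At y
  have hfoc : ∀ y, gF (xs y) = At y := by
    intro y
    refine aux_subgrad_eq F (gF (xs y)) (xs y) (At y) (hgF _) (fun z => ?_)
    have h1 := hub y z
    have h2 := hxs y
    have h3 : ⟪y, An z - b⟫ = ⟪y, An (xs y) - b⟫ + ⟪At y, z - xs y⟫ := by
      rw [← hadj, inner_sub_right, inner_sub_right, map_sub, inner_sub_right]
      ring
    rw [h3] at h1
    linarith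
  -- gradient of Ψ
  have hgrad : ∀ y, gΨ y = An (xs y) - b := by
    intro y
    refine aux_subgrad_eq Ψ (gΨ y) y (An (xs y) - b) (hgΨ y) (fun z => ?_)
    have h1 := hub z (xs y)
    have h2 := hxs y
    have h3 : ⟪An (xs y) - b, z - y⟫ = ⟪z, An (xs y) - b⟫ - ⟪y, An (xs y) - b⟫ := by
      rw [real_inner_comm, inner_sub_left]
    linarith
  -- Part 1
  have part1 : ∀ u v, ‖gΨ u - gΨ v‖ ≤ lmax / γF * ‖u - v‖ := by
    intro u v
    set d : EuclideanSpace ℝ (Fin n) := xs u - xs v with hd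
    have hmono : γF * ‖d‖ ^ 2 ≤ ⟪gF (xs u) - gF (xs v), d⟫ :=
      aux_strong_mono F gF γF hsc hgF _ _
    rw [hfoc u, hfoc v, ← map_sub] at hmono
    have hinn : ⟪At (u - v), d⟫ ≤ Real.sqrt lmax * ‖u - v‖ * ‖d‖ := by
      calc ⟪At (u - v), d⟫ ≤ ‖At (u - v)‖ * ‖d‖ := real_inner_le_norm _ _
        _ ≤ Real.sqrt lmax * ‖u - v‖ * ‖d‖ :=
            mul_le_mul_of_nonneg_right (hAtbd _) (norm_nonneg _)
    have hgd : gΨ u - gΨ v = An d := by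
      rw [hgrad u, hgrad v, hd, map_sub]; abel
    rw [hgd]
    have hAd : ‖An d‖ ≤ Real.sqrt lmax * ‖d‖ := hAbd d
    rcases eq_or_lt_of_le (norm_nonneg d) with h0 | h0
    · have : ‖An d‖ ≤ 0 := by
        rw [← h0] at hAd; simpa using hAd
      have h2 : 0 ≤ lmax / γF * ‖u - v‖ := by positivity
      linarith
    · have hdle : γF * ‖d‖ ≤ Real.sqrt lmax * ‖u - v‖ := by
        nlinarith
      have hs : 0 ≤ Real.sqrt lmax := Real.sqrt_nonneg _
      calc ‖An d‖ ≤ Real.sqrt lmax * ‖d‖ := hAd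
        _ ≤ Real.sqrt lmax * (Real.sqrt lmax * ‖u - v‖ / γF) := by
            apply mul_le_mul_of_nonneg_left _ hs
            rw [le_div_iff₀ hγF]
            nlinarith
        _ = Real.sqrt lmax * Real.sqrt lmax * ‖u - v‖ / γF := by ring
        _ = lmax / γF * ‖u - v‖ := by
            rw [Real.mul_self_sqrt hlmaxpos.le]; ring
  -- membership bridge for S
  have hSmem : ∀ y, y ∈ S ↔ ∀ v : EuclideanSpace ℝ (Fin p), At v = 0 → ⟪y - y0, v⟫ = 0 := by
    intro y; rw [hS]; simp [hAt, Matrix.toEuclideanLin_apply]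
  have hy0S : y0 ∈ S := by
    rw [hSmem]; intro v _; simp
  -- convexity of S
  have hSconv : Convex ℝ S := by
    intro y hy z hz a c ha hc hac
    rw [hSmem] at hy hz ⊢
    intro v hv
    have he : a • y + c • z - y0 = a • (y - y0) + c • (z - y0) := by
      have : c = 1 - a := by linarith
      rw [this]; module
    rw [he, inner_add_left, real_inner_smul_left, real_inner_smul_left, hy v hv, hz v hv]
    ring
  -- lower bound on ‖At (y-z)‖ for y z ∈ S
  have hAtlow : ∀ y ∈ S, ∀ z ∈ S, lminpos * ‖y - z‖ ^ 2 ≤ ‖At (y - z)‖ ^ 2 := by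
    intro y hy z hz
    rw [hSmem] at hy hz
    have horth : ∀ v : EuclideanSpace ℝ (Fin p), Matrix.toEuclideanLin Aᵀ v = 0 →
        ⟪y - z, v⟫ = 0 := by
      intro v hv
      have he : y - z = (y - y0) - (z - y0) := by abel
      rw [he, inner_sub_left, hy v hv, hz v hv]
      ring
    obtain ⟨w, hw⟩ := aux_range A (y - z) horth
    have := aux_lower A hH lminpos hlmin w
    rw [hw] at this
    exact this
  -- descent lemma for F
  have hdesc : ∀ (x h : EuclideanSpace ℝ (Fin n)),
      F (x + h) ≤ F x + ⟪gF x, h⟫ + LF / 2 * ‖h‖ ^ 2 :=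
    aux_descent F gF LF hLF.le hgF hFsmooth
  -- key strong convexity estimate
  have key : ∀ y ∈ S, ∀ z ∈ S, ∀ a c : ℝ, 0 ≤ a → 0 ≤ c → a + c = 1 →
      Ψ (a • y + c • z) + γψ / 2 * (a * c) * ‖y - z‖ ^ 2 ≤ a * Ψ y + c * Ψ z := by
    intro y hy z hz a c ha hc hac
    set yt := a • y + c • z with hyt
    set xt := xs yt with hxt
    set d : EuclideanSpace ℝ (Fin n) := At (y - z) with hdd
    have hdn : lminpos * ‖y - z‖ ^ 2 ≤ ‖d‖ ^ 2 := hAtlow y hy z hz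
    -- estimate
    have est : ∀ (w : EuclideanSpace ℝ (Fin p)) (s : ℝ),
        ⟪w, An xt - b⟫ - F xt + s * ⟪At w - At yt, d⟫ - LF / 2 * s ^ 2 * ‖d‖ ^ 2 ≤ Ψ w := by
      intro w s
      have h1 := hub w (xt + s • d)
      have h2 : ⟪w, An (xt + s • d) - b⟫
          = ⟪w, An xt - b⟫ + s * ⟪At w, d⟫ := by
        rw [map_add, _root_.map_smul]
        rw [show An xt + s • An d - b = (An xt - b) + s • An d by abel]
        rw [inner_add_right, real_inner_smul_right, hadj]
      have h3 : F (xt + s • d) ≤ F xt + s * ⟪At yt, d⟫ + LF / 2 * s ^ 2 * ‖d‖ ^ 2 := by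
        have hh := hdesc xt (s • d)
        rw [hfoc yt, real_inner_smul_right, norm_smul] at hh
        have he : (‖s‖ * ‖d‖) ^ 2 = s ^ 2 * ‖d‖ ^ 2 := by
          rw [mul_pow, Real.norm_eq_abs, sq_abs]
        rw [he] at hh
        linarith
      have h4 : s * ⟪At w - At yt, d⟫ = s * ⟪At w, d⟫ - s * ⟪At yt, d⟫ := by
        rw [inner_sub_left]; ring
      rw [h2] at h1
      linarith [h1, h3, h4]
    have hc' : c = 1 - a := by linarith
    have hy1 : At y - At yt = c • d := by
      have hyy : y - yt = c • (y - z) := by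
        rw [hyt, hc']; module
      rw [← map_sub, hyy, _root_.map_smul, hdd]
    have hz1 : At z - At yt = (-a) • d := by
      have hzz : z - yt = (-a) • (y - z) := by
        rw [hyt, hc']; module
      rw [← map_sub, hzz, _root_.map_smul, hdd]
    have e1' : ⟪y, An xt - b⟫ - F xt + c^2/(2*LF) * ‖d‖^2 ≤ Ψ y := by
      have h := est y (c / LF)
      rw [hy1, real_inner_smul_left, real_inner_self_eq_norm_sq] at h
      have harith : (c/LF) * (c * ‖d‖^2) - LF / 2 * (c/LF)^2 * ‖d‖^2
          = c^2/(2*LF) * ‖d‖^2 := by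
        field_simp; ring
      linarith [h, harith]
    have e2' : ⟪z, An xt - b⟫ - F xt + a^2/(2*LF) * ‖d‖^2 ≤ Ψ z := by
      have h := est z (-(a / LF))
      rw [hz1, real_inner_smul_left, real_inner_self_eq_norm_sq] at h
      have harith : (-(a/LF)) * ((-a) * ‖d‖^2) - LF / 2 * (-(a/LF))^2 * ‖d‖^2
          = a^2/(2*LF) * ‖d‖^2 := by
        field_simp; ring
      linarith [h, harith]
    have hmul1 := mul_le_mul_of_nonneg_left e1' ha
    have hmul2 := mul_le_mul_of_nonneg_left e2' hc
    have hsum : ⟪yt, An xt - b⟫ = a * ⟪y, An xt - b⟫ + c * ⟪z, An xt - b⟫ := by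
      rw [hyt, inner_add_left, real_inner_smul_left, real_inner_smul_left]
    have hΨyt : Ψ yt = ⟪yt, An xt - b⟫ - F xt := hxs yt
    have hid : a * (c^2/(2*LF) * ‖d‖^2) + c * (a^2/(2*LF) * ‖d‖^2)
        = a*c/(2*LF) * ‖d‖^2 := by
      rw [hc']; field_simp; ring
    have hF : a * F xt + c * F xt = F xt := by rw [← add_mul, hac, one_mul]
    have Hd : a*c/(2*LF) * (lminpos * ‖y - z‖^2) ≤ a*c/(2*LF) * ‖d‖^2 := by
      apply mul_le_mul_of_nonneg_left hdn
      positivity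
    have heq2 : γψ/2 * (a*c) * ‖y - z‖^2 = a*c/(2*LF) * (lminpos * ‖y - z‖^2) := by
      rw [hγψ]; field_simp
    nlinarith [hmul1, hmul2, hsum, hΨyt, hid, hF, Hd, heq2]
  -- Part 2
  have hSC : StrongConvexOn S γψ Ψ := by
    refine ⟨hSconv, fun y hy z hz a c ha hc hac => ?_⟩
    have := key y hy z hz a c ha hc hac
    simp only [smul_eq_mul]
    linarith
  -- Part 3
  have hKnn : 0 ≤ Ψ y0 - Ψ ystar := by linarith [hymin y0 hy0S]
  have part3 : γψ / 2 * ‖y0 - ystar‖ ^ 2 ≤ Ψ y0 - Ψ ystar := by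
    have hDnn : 0 ≤ ‖y0 - ystar‖^2 := by positivity
    have claim : ∀ t : ℝ, 0 < t → t < 1 → γψ/2 * (1 - t) * ‖y0 - ystar‖^2 ≤ Ψ y0 - Ψ ystar := by
      intro t ht0 ht1
      have hmemS : t • y0 + (1-t) • ystar ∈ S :=
        hSconv hy0S hystar ht0.le (by linarith) (by ring)
      have hk := key y0 hy0S ystar hystar t (1-t) ht0.le (by linarith) (by ring)
      have hm := hymin _ hmemS
      have h2 : γψ/2 * (t*(1-t)) * ‖y0 - ystar‖^2 ≤ t * (Ψ y0 - Ψ ystar) := by linarith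
      nlinarith [h2, ht0]
    by_contra hcon
    push_neg at hcon
    set ε := γψ/2 * ‖y0 - ystar‖^2 - (Ψ y0 - Ψ ystar) with hε
    have hεpos : 0 < ε := by rw [hε]; linarith
    have hpos : 0 < γψ * ‖y0 - ystar‖^2 + 1 := by positivity
    set t := min (1/2 : ℝ) (ε / (γψ * ‖y0 - ystar‖^2 + 1)) with htdef
    have ht0 : 0 < t := lt_min (by norm_num) (div_pos hεpos hpos)
    have ht1 : t < 1 := lt_of_le_of_lt (min_le_left _ _) (by norm_num)
    have hc2 := claim t ht0 ht1
    have htle : t ≤ ε / (γψ * ‖y0 - ystar‖^2 + 1) := min_le_right _ _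
    have hstep : γψ/2 * t * ‖y0 - ystar‖^2 < ε := by
      set q := ε / (γψ * ‖y0 - ystar‖^2 + 1) with hq
      have hq0 : 0 < q := div_pos hεpos hpos
      have hqe : q * (γψ * ‖y0 - ystar‖^2 + 1) = ε := div_mul_cancel₀ _ (ne_of_gt hpos)
      have hqD : 0 ≤ q * (γψ * ‖y0 - ystar‖^2) := by positivity
      have htq : γψ/2 * t * ‖y0 - ystar‖^2 ≤ γψ/2 * q * ‖y0 - ystar‖^2 := by
        have h0 : 0 ≤ γψ/2 * ‖y0 - ystar‖^2 := by positivity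
        nlinarith [htle, h0]
      have h3 : γψ/2 * q * ‖y0 - ystar‖^2 < ε := by
        rw [← hqe]
        nlinarith [hqD, hq0]
      exact lt_of_le_of_lt htq h3
    linarith [hc2, hstep]
  -- Part 4
  have part4 : Ψ y0 - Ψ ystar ≤ 1 / (2 * γψ) * ‖gΨ y0‖ ^ 2 := by
    set d := ystar - y0 with hd4
    have hdir : ⟪gΨ y0, d⟫ ≤ Ψ ystar - Ψ y0 - γψ/2 * ‖d‖^2 := by
      refine aux_dir_le Ψ (gΨ y0) y0 d (hgΨ y0) _ (γψ/2 * ‖d‖^2) (fun t ht => ?_)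
      have hk := key y0 hy0S ystar hystar (1-t) t (by linarith [ht.2]) ht.1.le (by ring)
      have hco : (1-t) • y0 + t • ystar = y0 + t • d := by rw [hd4]; module
      rw [hco] at hk
      have hnorm : ‖y0 - ystar‖ = ‖d‖ := by rw [hd4, norm_sub_rev]
      rw [hnorm] at hk
      nlinarith [hk]
    have hexp : ‖d + γψ⁻¹ • gΨ y0‖^2
        = ‖d‖^2 + 2 * (γψ⁻¹ * ⟪gΨ y0, d⟫) + γψ⁻¹^2 * ‖gΨ y0‖^2 := by
      rw [norm_add_sq_real, real_inner_smul_right, norm_smul, Real.norm_eq_abs,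
        abs_of_pos (inv_pos.mpr hγψpos), real_inner_comm]
      ring
    have h0 : 0 ≤ γψ/2 * ‖d + γψ⁻¹ • gΨ y0‖^2 := by positivity
    rw [hexp] at h0
    have h0' : 0 ≤ γψ/2*‖d‖^2 + ⟪gΨ y0, d⟫ + 1/(2*γψ) * ‖gΨ y0‖^2 := by
      have e : γψ/2 * (‖d‖^2 + 2*(γψ⁻¹ * ⟪gΨ y0, d⟫) + γψ⁻¹^2 * ‖gΨ y0‖^2)
          = γψ/2*‖d‖^2 + ⟪gΨ y0, d⟫ + 1/(2*γψ) * ‖gΨ y0‖^2 := by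
        field_simp
      nlinarith [h0, e]
    linarith [hdir, h0']
  exact ⟨part1, hSC, part3, part4⟩
end aux
end
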